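/- arXiv:2101.11288 — 4 statements merged into one kernel-verified Lean document; each statement's English description precedes it below -/
import Mathlib

section
/- The set of 3×3 unistochastic matrices is closed under multiplication by factorisable matrices (if A is a 3×3 factorisable bistochastic matrix and B is a 3×3 unistochastic matrix, then AB and BA are unistochastic) and is star-shaped with respect to the flat matrix W₃ (if B is unistochastic then (1−λ)B + λW₃ is unistochastic for all λ ∈ [0,1]). -/
/-- A `d × d` real matrix is bistochastic (doubly stochastic) if all its entries are
non-negative and each row and each column sums to `1`. -/
def Bistochastic {d : ℕ} (B : Matrix (Fin d) (Fin d) ℝ) : Prop :=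
  (∀ j k, 0 ≤ B j k) ∧ (∀ j, ∑ k, B j k = 1) ∧ (∀ k, ∑ j, B j k = 1)

/-- A bistochastic matrix is bracelet if for every pair of columns `k, l` and every `j₀`,
`2 √(B j₀ k * B j₀ l) ≤ ∑ j, √(B j k * B j l)` (equivalently, twice the maximum is at most
the sum), and the analogous condition holds for every pair of rows. -/
def Bracelet {d : ℕ} (B : Matrix (Fin d) (Fin d) ℝ) : Prop :=
  Bistochastic B ∧
  (∀ k l j₀ : Fin d, 2 * Real.sqrt (B j₀ k * B j₀ l) ≤ ∑ j, Real.sqrt (B j k * B j l)) ∧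
  (∀ j k l₀ : Fin d, 2 * Real.sqrt (B j l₀ * B k l₀) ≤ ∑ l, Real.sqrt (B j l * B k l))

/-- A `d × d` bistochastic matrix `E` is elementary if `E k k = 1` for at least `d - 2`
indices `k`. -/
def Elementary {d : ℕ} (E : Matrix (Fin d) (Fin d) ℝ) : Prop :=
  Bistochastic E ∧ ∃ S : Finset (Fin d), d - 2 ≤ S.card ∧ ∀ k ∈ S, E k k = 1

/-- The set `F_d` of factorisable bistochastic matrices: the topological closure of the set
of finite products of elementary bistochastic matrices (the identity being the empty
product). -/
def Factorisable {d : ℕ} (B : Matrix (Fin d) (Fin d) ℝ) : Prop :=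
  B ∈ closure { M : Matrix (Fin d) (Fin d) ℝ |
    ∃ L : List (Matrix (Fin d) (Fin d) ℝ), (∀ E ∈ L, Elementary E) ∧ M = L.prod }

/-- A `d × d` bistochastic matrix `B` is unistochastic if there is a unitary matrix `U`
with `B j k = |U j k|²` for all `j, k`. -/
def Unistochastic {d : ℕ} (B : Matrix (Fin d) (Fin d) ℝ) : Prop :=
  Bistochastic B ∧ ∃ U ∈ Matrix.unitaryGroup (Fin d) ℂ,
    ∀ j k, B j k = ‖U j k‖ ^ 2

/-- The flat (van der Waerden) matrix `W_d` with all entries equal to `1/d`. -/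
noncomputable def flatMatrix (d : ℕ) : Matrix (Fin d) (Fin d) ℝ := Matrix.of fun _ _ => (1 : ℝ) / d

open Real Complex

local notation "conj'" => starRingEnd ℂ

/-- Cauchy–Schwarz for square roots: `√(x y) + √(x' y') ≤ √((x+x')(y+y'))`. -/
lemma sqrt_cs {x y x' y' : ℝ} (hx : 0 ≤ x) (hy : 0 ≤ y) (hx' : 0 ≤ x') (hy' : 0 ≤ y') :
    Real.sqrt (x*y) + Real.sqrt (x'*y') ≤ Real.sqrt ((x+x')*(y+y')) := by
  rw [show (x+x')*(y+y') = x*y + x'*y' + (x*y' + x'*y) by ring]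
  have h1 : Real.sqrt (x*y) * Real.sqrt (x'*y') = Real.sqrt (x*y') * Real.sqrt (x'*y) := by
    rw [← Real.sqrt_mul (by positivity), ← Real.sqrt_mul (by positivity)]
    ring_nf
  have h2 : Real.sqrt (x*y')^2 = x*y' := Real.sq_sqrt (by positivity)
  have h3 : Real.sqrt (x'*y)^2 = x'*y := Real.sq_sqrt (by positivity)
  rw [show Real.sqrt (x*y) + Real.sqrt (x'*y') = Real.sqrt ((Real.sqrt (x*y) + Real.sqrt (x'*y'))^2) from (Real.sqrt_sq (by positivity)).symm]
  apply Real.sqrt_le_sqrt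
  have h4 : Real.sqrt (x*y)^2 = x*y := Real.sq_sqrt (by positivity)
  have h5 : Real.sqrt (x'*y')^2 = x'*y' := Real.sq_sqrt (by positivity)
  nlinarith [sq_nonneg (Real.sqrt (x*y') - Real.sqrt (x'*y))]

/-- Minkowski-type triangle: componentwise triangle implies triangle for Euclidean norms. -/
lemma tri2 {p0 p1 p2 q0 q1 q2 : ℝ} (hp0 : 0 ≤ p0) (hp1 : 0 ≤ p1) (hp2 : 0 ≤ p2)
    (hq0 : 0 ≤ q0) (hq1 : 0 ≤ q1) (hq2 : 0 ≤ q2)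
    (hp : p0 ≤ p1 + p2) (hq : q0 ≤ q1 + q2) :
    Real.sqrt (p0^2+q0^2) ≤ Real.sqrt (p1^2+q1^2) + Real.sqrt (p2^2+q2^2) := by
  have step1 : Real.sqrt (p0^2+q0^2) ≤ Real.sqrt ((p1+p2)^2+(q1+q2)^2) := by
    apply Real.sqrt_le_sqrt; nlinarith
  refine step1.trans ?_
  have h1 : Real.sqrt (p1^2+q1^2)^2 = p1^2+q1^2 := Real.sq_sqrt (by positivity)
  have h2 : Real.sqrt (p2^2+q2^2)^2 = p2^2+q2^2 := Real.sq_sqrt (by positivity)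
  have hcs : p1*p2 + q1*q2 ≤ Real.sqrt (p1^2+q1^2) * Real.sqrt (p2^2+q2^2) := by
    rw [← Real.sqrt_mul (by positivity)]
    rw [show p1*p2+q1*q2 = Real.sqrt ((p1*p2+q1*q2)^2) from (Real.sqrt_sq (by positivity)).symm]
    apply Real.sqrt_le_sqrt; nlinarith [sq_nonneg (p1*q2 - p2*q1)]
  rw [show Real.sqrt ((p1+p2)^2+(q1+q2)^2) = Real.sqrt (Real.sqrt ((p1+p2)^2+(q1+q2)^2)^2) from (Real.sqrt_sq (Real.sqrt_nonneg _)).symm]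
  have h3 : Real.sqrt ((p1+p2)^2+(q1+q2)^2)^2 = (p1+p2)^2+(q1+q2)^2 := Real.sq_sqrt (by positivity)
  rw [show Real.sqrt (p1^2+q1^2) + Real.sqrt (p2^2+q2^2) = Real.sqrt ((Real.sqrt (p1^2+q1^2) + Real.sqrt (p2^2+q2^2))^2) from (Real.sqrt_sq (by positivity)).symm]
  apply Real.sqrt_le_sqrt
  nlinarith

/-- AM–GM style bound: mixing two rows. -/
lemma mix_lower {x y x' y' t : ℝ} (hx : 0 ≤ x) (hy : 0 ≤ y) (hx' : 0 ≤ x') (hy' : 0 ≤ y')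
    (ht : 0 ≤ t) (ht1 : t ≤ 1) :
    t * Real.sqrt (x*y) + (1-t) * Real.sqrt (x'*y') ≤ Real.sqrt ((t*x+(1-t)*x')*(t*y+(1-t)*y')) := by
  rw [show t * Real.sqrt (x*y) + (1-t) * Real.sqrt (x'*y')
      = Real.sqrt ((t * Real.sqrt (x*y) + (1-t) * Real.sqrt (x'*y'))^2) from
      (Real.sqrt_sq (by have := Real.sqrt_nonneg (x*y); have := Real.sqrt_nonneg (x'*y'); nlinarith)).symm]
  apply Real.sqrt_le_sqrt
  have h1 : Real.sqrt (x*y)^2 = x*y := Real.sq_sqrt (by positivity)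
  have h2 : Real.sqrt (x'*y')^2 = x'*y' := Real.sq_sqrt (by positivity)
  have h3 : Real.sqrt (x*y) * Real.sqrt (x'*y') = Real.sqrt (x*y') * Real.sqrt (x'*y) := by
    rw [← Real.sqrt_mul (by positivity), ← Real.sqrt_mul (by positivity)]; ring_nf
  have h4 : Real.sqrt (x*y')^2 = x*y' := Real.sq_sqrt (by positivity)
  have h5 : Real.sqrt (x'*y)^2 = x'*y := Real.sq_sqrt (by positivity)
  nlinarith [sq_nonneg (Real.sqrt (x*y') - Real.sqrt (x'*y)), mul_nonneg ht (by linarith : (0:ℝ) ≤ 1 - t)]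

lemma absmul {t d sc : ℝ} (ht : 0 ≤ t) (ht1 : t ≤ 1) (hd : d ≤ sc) (hd2 : -d ≤ sc) :
    (2*t-1)*d ≤ sc := by
  rcases le_total 0 d with h | h
  · nlinarith
  · nlinarith

-- difference + triangle propagation for row-mixing
lemma left_tri {t x y x' y' sc : ℝ} (hx : 0 ≤ x) (hy : 0 ≤ y) (hx' : 0 ≤ x') (hy' : 0 ≤ y')
    (ht : 0 ≤ t) (ht1 : t ≤ 1) (hsc : 0 ≤ sc)
    (h1 : Real.sqrt (x*y) ≤ Real.sqrt (x'*y') + sc)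
    (h2 : Real.sqrt (x'*y') ≤ Real.sqrt (x*y) + sc)
    (h3 : sc ≤ Real.sqrt (x*y) + Real.sqrt (x'*y')) :
    Real.sqrt ((t*x+(1-t)*x')*(t*y+(1-t)*y')) ≤ Real.sqrt (((1-t)*x+t*x')*((1-t)*y+t*y')) + sc ∧
    Real.sqrt (((1-t)*x+t*x')*((1-t)*y+t*y')) ≤ Real.sqrt ((t*x+(1-t)*x')*(t*y+(1-t)*y')) + sc ∧
    sc ≤ Real.sqrt ((t*x+(1-t)*x')*(t*y+(1-t)*y')) + Real.sqrt (((1-t)*x+t*x')*((1-t)*y+t*y')) := by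
  have ht' : (0:ℝ) ≤ 1 - t := by linarith
  have hxx : 0 ≤ t*x+(1-t)*x' := by nlinarith
  have hyy : 0 ≤ t*y+(1-t)*y' := by nlinarith
  have hxx' : 0 ≤ (1-t)*x+t*x' := by nlinarith
  have hyy' : 0 ≤ (1-t)*y+t*y' := by nlinarith
  set sa := Real.sqrt (x*y) with hsa
  set sb := Real.sqrt (x'*y') with hsb
  set sa' := Real.sqrt ((t*x+(1-t)*x')*(t*y+(1-t)*y')) with hsa'
  set sb' := Real.sqrt (((1-t)*x+t*x')*((1-t)*y+t*y')) with hsb'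
  have hsa0 : 0 ≤ sa := Real.sqrt_nonneg _
  have hsb0 : 0 ≤ sb := Real.sqrt_nonneg _
  have hsa'0 : 0 ≤ sa' := Real.sqrt_nonneg _
  have hsb'0 : 0 ≤ sb' := Real.sqrt_nonneg _
  have hla : t * sa + (1-t) * sb ≤ sa' := mix_lower hx hy hx' hy' ht ht1
  have hlb : (1-t) * sa + t * sb ≤ sb' := by
    have h := mix_lower hx' hy' hx hy ht ht1
    have e : ((1-t)*x+t*x')*((1-t)*y+t*y') = (t*x'+(1-t)*x)*(t*y'+(1-t)*y) := by ring
    rw [hsb', e]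
    linarith
  have hsum : sa + sb ≤ sa' + sb' := by linarith
  have hsq_a : sa^2 = x*y := Real.sq_sqrt (by positivity)
  have hsq_b : sb^2 = x'*y' := Real.sq_sqrt (by positivity)
  have hsq_a' : sa'^2 = (t*x+(1-t)*x')*(t*y+(1-t)*y') := Real.sq_sqrt (mul_nonneg hxx hyy)
  have hsq_b' : sb'^2 = ((1-t)*x+t*x')*((1-t)*y+t*y') := Real.sq_sqrt (mul_nonneg hxx' hyy')
  have hdiff : sa'^2 - sb'^2 = (2*t-1)*(sa - sb)*(sa + sb) := by
    rw [hsq_a', hsq_b']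
    have h' : (t*x+(1-t)*x')*(t*y+(1-t)*y') - ((1-t)*x+t*x')*((1-t)*y+t*y')
        = (2*t-1)*(sa^2 - sb^2) := by rw [hsq_a, hsq_b]; ring
    linear_combination h'
  have key : ∀ u v : ℝ, 0 ≤ u → 0 ≤ v → u^2 - v^2 ≤ sc * (u + v) → u ≤ v + sc := by
    intro u v hu hv h
    rcases eq_or_lt_of_le (add_nonneg hu hv) with h0 | h0
    · nlinarith
    · nlinarith
  have hscsum : sc * (sa + sb) ≤ sc * (sa' + sb') := mul_le_mul_of_nonneg_left hsum hsc
  refine ⟨?_, ?_, by linarith⟩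
  · apply key _ _ hsa'0 hsb'0
    have e2 : (2*t-1)*(sa - sb) ≤ sc := absmul ht ht1 (by linarith) (by linarith)
    have : (2*t-1)*(sa-sb)*(sa+sb) ≤ sc*(sa+sb) :=
      mul_le_mul_of_nonneg_right e2 (by linarith)
    linarith [hdiff]
  · apply key _ _ hsb'0 hsa'0
    have e2 : (2*t-1)*(sb - sa) ≤ sc := absmul ht ht1 (by linarith) (by linarith)
    have hdiff' : sb'^2 - sa'^2 = (2*t-1)*(sb - sa)*(sa + sb) := by linear_combination -hdiff
    have : (2*t-1)*(sb-sa)*(sa+sb) ≤ sc*(sa+sb) :=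
      mul_le_mul_of_nonneg_right e2 (by linarith)
    linarith [hdiff']

lemma sqrt_prod_lower {a b u v : ℝ} (ha : 0 ≤ a) (hb : 0 ≤ b) (hu : 0 ≤ u) (hv : 0 ≤ v) :
    a*Real.sqrt (u*v)+b ≤ Real.sqrt ((a*u+b)*(a*v+b)) := by
  have hgm : 2*Real.sqrt u*Real.sqrt v ≤ u + v := by
    nlinarith [sq_nonneg (Real.sqrt u - Real.sqrt v), Real.sq_sqrt hu, Real.sq_sqrt hv]
  have hm : Real.sqrt (u*v) = Real.sqrt u * Real.sqrt v := Real.sqrt_mul hu v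
  have hq : Real.sqrt (u*v)^2 = u*v := Real.sq_sqrt (mul_nonneg hu hv)
  rw [show a*Real.sqrt (u*v)+b = Real.sqrt ((a*Real.sqrt (u*v)+b)^2) from
    (Real.sqrt_sq (by positivity)).symm]
  apply Real.sqrt_le_sqrt
  have hprod := mul_nonneg (mul_nonneg ha hb) (by linarith : 0 ≤ u+v-2*Real.sqrt (u*v))
  have hq2 : a^2 * Real.sqrt (u*v)^2 = a^2*(u*v) := by rw [hq]
  nlinarith [hq2, hprod]

lemma star_core {a b x0 x1 x2 y0 y1 y2 r0 r1 r2 c1 c2 P : ℝ}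
    (ha : 0 ≤ a) (hb : 0 ≤ b) (hc1 : 0 ≤ c1) (hc2 : 0 ≤ c2) (hr0n : 0 ≤ r0)
    (hr0 : r0^2 = x0*y0) (hr1 : r1^2 = x1*y1) (hr2 : r2^2 = x2*y2)
    (htri : r0 ≤ r1 + r2)
    (hS : x0 + y0 ≤ 1) (hsum : x1+y1+x2+y2 = 2-(x0+y0))
    (hP : a^2*(r1*r2) + a*b*c1 + a*b*c2 + b^2 ≤ P) :
    (a*x0+b)*(a*y0+b) ≤ (a*x1+b)*(a*y1+b) + (a*x2+b)*(a*y2+b) + 2*P := by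
  have htri' : r0^2 ≤ (r1+r2)^2 := by
    calc r0^2 = r0*r0 := by ring
    _ ≤ (r1+r2)*(r1+r2) := mul_self_le_mul_self hr0n htri
    _ = (r1+r2)^2 := by ring
  have m1 : a^2 * (x0*y0) ≤ a^2 * (x1*y1 + x2*y2 + 2*(r1*r2)) := by
    apply mul_le_mul_of_nonneg_left _ (sq_nonneg a)
    nlinarith [htri']
  have m2 : a*b*(x0+y0) ≤ a*b*(x1+y1+x2+y2) :=
    mul_le_mul_of_nonneg_left (by linarith) (mul_nonneg ha hb)
  nlinarith [m1, m2, hP, mul_nonneg (mul_nonneg ha hb) hc1,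
    mul_nonneg (mul_nonneg ha hb) hc2, sq_nonneg b]

/-- The star-shape inequality for one triangle inequality. -/
lemma star_tri {a b x0 x1 x2 y0 y1 y2 : ℝ} (ha : 0 ≤ a) (hb : 0 ≤ b)
    (hx0 : 0 ≤ x0) (hx1 : 0 ≤ x1) (hx2 : 0 ≤ x2)
    (hy0 : 0 ≤ y0) (hy1 : 0 ≤ y1) (hy2 : 0 ≤ y2)
    (hx : x0 + x1 + x2 = 1) (hy : y0 + y1 + y2 = 1)
    (htri : Real.sqrt (x0*y0) ≤ Real.sqrt (x1*y1) + Real.sqrt (x2*y2)) :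
    Real.sqrt ((a*x0+b)*(a*y0+b)) ≤ Real.sqrt ((a*x1+b)*(a*y1+b)) + Real.sqrt ((a*x2+b)*(a*y2+b)) := by
  -- step 1 : x0 + y0 ≤ 1
  have hcs : Real.sqrt (x1*y1) + Real.sqrt (x2*y2) ≤ Real.sqrt ((x1+x2)*(y1+y2)) :=
    sqrt_cs hx1 hy1 hx2 hy2
  have hx12 : x1 + x2 = 1 - x0 := by linarith
  have hy12 : y1 + y2 = 1 - y0 := by linarith
  have hS : x0 + y0 ≤ 1 := by
    by_contra hS
    push_neg at hS
    have h1 : Real.sqrt (x0*y0) ≤ Real.sqrt ((1-x0)*(1-y0)) := by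
      refine htri.trans (hcs.trans_eq ?_)
      rw [hx12, hy12]
    have h2 : x0*y0 ≤ (1-x0)*(1-y0) := by
      have := Real.sqrt_le_sqrt (le_refl (x0*y0))
      nlinarith [Real.sq_sqrt (mul_nonneg hx0 hy0), Real.sq_sqrt (mul_nonneg (by linarith : (0:ℝ) ≤ 1-x0) (by linarith : (0:ℝ) ≤ 1-y0)), Real.sqrt_nonneg (x0*y0), Real.sqrt_nonneg ((1-x0)*(1-y0)), h1]
    nlinarith
  -- abbreviations
  set r0 := Real.sqrt (x0*y0) with hr0
  set r1 := Real.sqrt (x1*y1) with hr1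
  set r2 := Real.sqrt (x2*y2) with hr2
  set c1 := Real.sqrt (x1*y2) with hc1
  set c2 := Real.sqrt (x2*y1) with hc2
  set f0 := Real.sqrt ((a*x0+b)*(a*y0+b)) with hf0
  set f1 := Real.sqrt ((a*x1+b)*(a*y1+b)) with hf1
  set f2 := Real.sqrt ((a*x2+b)*(a*y2+b)) with hf2
  have hsq : ∀ u v : ℝ, 0 ≤ u → 0 ≤ v → Real.sqrt (u*v)^2 = u*v := fun u v hu hv =>
    Real.sq_sqrt (mul_nonneg hu hv)
  have hr0sq := hsq _ _ hx0 hy0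
  have hr1sq := hsq _ _ hx1 hy1
  have hr2sq := hsq _ _ hx2 hy2
  have hc1sq := hsq _ _ hx1 hy2
  have hc2sq := hsq _ _ hx2 hy1
  have hf0sq : f0^2 = (a*x0+b)*(a*y0+b) := Real.sq_sqrt (by positivity)
  have hf1sq : f1^2 = (a*x1+b)*(a*y1+b) := Real.sq_sqrt (by positivity)
  have hf2sq : f2^2 = (a*x2+b)*(a*y2+b) := Real.sq_sqrt (by positivity)
  -- lower bounds for cross products
  have key : ∀ u v u' v' : ℝ, 0 ≤ u → 0 ≤ v → 0 ≤ u' → 0 ≤ v' →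
      (a*Real.sqrt (u*v')+b)*(a*Real.sqrt (u'*v)+b) ≤
        Real.sqrt ((a*u+b)*(a*v+b)) * Real.sqrt ((a*u'+b)*(a*v'+b)) := by
    intro u v u' v' hu hv hu' hv'
    have e1 : Real.sqrt ((a*u+b)*(a*v+b)) * Real.sqrt ((a*u'+b)*(a*v'+b))
        = Real.sqrt ((a*u+b)*(a*v'+b)) * Real.sqrt ((a*u'+b)*(a*v+b)) := by
      rw [← Real.sqrt_mul (by positivity), ← Real.sqrt_mul (by positivity)]
      ring_nf
    rw [e1]
    exact mul_le_mul (sqrt_prod_lower ha hb hu hv') (sqrt_prod_lower ha hb hu' hv)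
      (by positivity) (Real.sqrt_nonneg _)
  have hf1f2 : (a*c1+b)*(a*c2+b) ≤ f1 * f2 := key x1 y1 x2 y2 hx1 hy1 hx2 hy2
  -- final squared comparison
  have hc1c2 : c1 * c2 = r1 * r2 := by
    rw [hc1, hc2, hr1, hr2, ← Real.sqrt_mul (by positivity), ← Real.sqrt_mul (by positivity)]
    ring_nf
  have hgoal2 : f0^2 ≤ (f1+f2)^2 := by
    have expand : (f1+f2)^2 = f1^2 + f2^2 + 2*(f1*f2) := by ring
    rw [expand, hf0sq, hf1sq, hf2sq]
    have hP : a^2*(r1*r2) + a*b*c1 + a*b*c2 + b^2 ≤ f1*f2 := by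
      have hcc : (a*c1+b)*(a*c2+b) = a^2*(r1*r2) + a*b*c1 + a*b*c2 + b^2 := by
        linear_combination a^2 * hc1c2
      linarith [hf1f2]
    exact star_core ha hb (Real.sqrt_nonneg _) (Real.sqrt_nonneg _) (Real.sqrt_nonneg _)
      hr0sq hr1sq hr2sq htri hS (by linarith) hP
  calc f0 = Real.sqrt (f0^2) := (Real.sqrt_sq (Real.sqrt_nonneg _)).symm
  _ ≤ Real.sqrt ((f1+f2)^2) := Real.sqrt_le_sqrt hgoal2
  _ = f1 + f2 := Real.sqrt_sq (by positivity)

/-- Three side lengths satisfying the triangle inequalities close up into a triangle. -/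
lemma tri_complex {r0 r1 r2 : ℝ} (h0 : 0 ≤ r0) (h1 : 0 ≤ r1) (h2 : 0 ≤ r2)
    (t0 : r0 ≤ r1 + r2) (t1 : r1 ≤ r0 + r2) (t2 : r2 ≤ r0 + r1) :
    ∃ z0 z1 z2 : ℂ, ‖z0‖ = r0 ∧ ‖z1‖ = r1 ∧ ‖z2‖ = r2 ∧
      z0 + z1 + z2 = 0 := by
  rcases eq_or_lt_of_le h1 with h1' | h1'
  · -- r1 = 0, so r0 = r2
    have he : r0 = r2 := le_antisymm (by linarith) (by linarith)
    refine ⟨(r0 : ℂ), 0, -(r0 : ℂ), ?_, ?_, ?_, by ring⟩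
    · simpa using h0
    · simp [← h1']
    · rw [norm_neg]; rw [he]; simpa using (he ▸ h0)
  · -- r1 > 0
    set x : ℝ := (r0^2 - r1^2 - r2^2)/(2*r1) with hx
    have hx2 : x^2 ≤ r2^2 := by
      rw [div_pow]
      rw [div_le_iff₀ (by positivity)]
      nlinarith [mul_nonneg (mul_nonneg (by linarith : (0:ℝ) ≤ r1+r2-r0) (by linarith : (0:ℝ) ≤ r1+r2+r0)) (mul_nonneg (by linarith : (0:ℝ) ≤ r0+r2-r1) (by linarith : (0:ℝ) ≤ r0-r2+r1))]
    set y : ℝ := Real.sqrt (r2^2 - x^2) with hy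
    have hysq : y^2 = r2^2 - x^2 := Real.sq_sqrt (by linarith)
    have habs2 : ‖(⟨x, y⟩ : ℂ)‖ = r2 := by
      rw [Complex.norm_def, Complex.normSq_mk]
      rw [show x*x + y*y = r2^2 by nlinarith [hysq]]
      exact Real.sqrt_sq h2
    have hsum : (2:ℝ)*r1*x = r0^2 - r1^2 - r2^2 := by
      rw [hx]; field_simp
    refine ⟨-((r1:ℂ) + ⟨x, y⟩), (r1 : ℂ), ⟨x, y⟩, ?_, by simpa using h1, habs2, by ring⟩
    rw [norm_neg]
    have : ((r1:ℂ) + ⟨x, y⟩) = ⟨r1 + x, y⟩ := by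
      apply Complex.ext <;> simp
    rw [this, Complex.norm_def, Complex.normSq_mk]
    rw [show (r1+x)*(r1+x) + y*y = r0^2 by nlinarith [hysq]]
    exact Real.sqrt_sq h0

/-- Construct the entry of the second column with prescribed modulus and product. -/
lemma col2_entry {b0 b1 : ℝ} (z : ℂ) (hb0 : 0 ≤ b0) (hb1 : 0 ≤ b1)
    (hz : ‖z‖ = Real.sqrt (b0*b1)) :
    ∃ v : ℂ, ‖v‖ = Real.sqrt b1 ∧ ((Real.sqrt b0 : ℝ) : ℂ) * v = z := by
  rcases eq_or_lt_of_le hb0 with hb | hb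
  · have hz0 : z = 0 := by
      have : ‖z‖ = 0 := by rw [hz, ← hb]; simp
      simpa using this
    exact ⟨(Real.sqrt b1 : ℝ), by simpa using Real.sqrt_nonneg b1, by simp [← hb, hz0]⟩
  · refine ⟨z / ((Real.sqrt b0 : ℝ) : ℂ), ?_, ?_⟩
    · rw [norm_div, hz]
      rw [Complex.norm_real, Real.norm_eq_abs, _root_.abs_of_nonneg (Real.sqrt_nonneg _)]
      rw [Real.sqrt_mul hb0]
      rw [mul_comm, mul_div_assoc, div_self (by positivity : Real.sqrt b0 ≠ 0), mul_one]
    · rw [mul_div_cancel₀]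
      simpa using (by positivity : Real.sqrt b0 ≠ 0)


lemma unitary_cols (u v w : Fin 3 → ℂ)
    (hw0 : w 0 = conj' (u 1 * v 2 - u 2 * v 1))
    (hw1 : w 1 = conj' (u 2 * v 0 - u 0 * v 2))
    (hw2 : w 2 = conj' (u 0 * v 1 - u 1 * v 0))
    (hu : conj' (u 0) * u 0 + conj' (u 1) * u 1 + conj' (u 2) * u 2 = 1)
    (hv : conj' (v 0) * v 0 + conj' (v 1) * v 1 + conj' (v 2) * v 2 = 1)
    (huv : conj' (u 0) * v 0 + conj' (u 1) * v 1 + conj' (u 2) * v 2 = 0) :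
    (Matrix.of fun j k => ![u j, v j, w j] k) ∈ Matrix.unitaryGroup (Fin 3) ℂ := by
  have huv' : u 0 * conj' (v 0) + u 1 * conj' (v 1) + u 2 * conj' (v 2) = 0 := by
    have := congrArg conj' huv
    simpa [map_add, map_mul, mul_comm] using this
  rw [Matrix.mem_unitaryGroup_iff']
  ext i k
  fin_cases i <;> fin_cases k <;>
    simp [Matrix.mul_apply, Fin.sum_univ_three, Matrix.one_apply, hw0, hw1, hw2,
      Matrix.star_apply, map_mul, map_sub] <;>
    first
      | exact hu
      | exact hv
      | exact huv
      | linear_combination huv'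
      | linear_combination (conj' (v 0) * v 0 + conj' (v 1) * v 1 + conj' (v 2) * v 2) * hu
          + hv - (u 0 * conj' (v 0) + u 1 * conj' (v 1) + u 2 * conj' (v 2)) * huv
      | ring
def colTri (B : Matrix (Fin 3) (Fin 3) ℝ) (k l : Fin 3) : Prop :=
  ∀ j₀ : Fin 3, 2 * Real.sqrt (B j₀ k * B j₀ l) ≤ ∑ j, Real.sqrt (B j k * B j l)

lemma uni_of_tri {B : Matrix (Fin 3) (Fin 3) ℝ} (hB : Bistochastic B) (hT : colTri B 0 1) :
    Unistochastic B := by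
  obtain ⟨hpos, hrow, hcol⟩ := hB
  have hr : ∀ j : Fin 3, 0 ≤ Real.sqrt (B j 0 * B j 1) := fun j => Real.sqrt_nonneg _
  have hsum3 : ∀ j₀ : Fin 3, 2 * Real.sqrt (B j₀ 0 * B j₀ 1) ≤
      Real.sqrt (B 0 0 * B 0 1) + Real.sqrt (B 1 0 * B 1 1) + Real.sqrt (B 2 0 * B 2 1) := by
    intro j₀; have := hT j₀; rwa [Fin.sum_univ_three] at this
  obtain ⟨z0, z1, z2, ha0, ha1, ha2, hz⟩ :=
    tri_complex (hr 0) (hr 1) (hr 2)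
      (by linarith [hsum3 0]) (by linarith [hsum3 1]) (by linarith [hsum3 2])
  set z : Fin 3 → ℂ := ![z0, z1, z2] with hzdef
  have hzabs : ∀ j : Fin 3, ‖z j‖ = Real.sqrt (B j 0 * B j 1) := by
    intro j; fin_cases j <;> simpa [hzdef]
  choose v hv1 hv2 using fun j : Fin 3 =>
    col2_entry (z j) (hpos j 0) (hpos j 1) (hzabs j)
  set u : Fin 3 → ℂ := fun j => ((Real.sqrt (B j 0) : ℝ) : ℂ) with hudef
  set w : Fin 3 → ℂ := ![conj' (u 1 * v 2 - u 2 * v 1), conj' (u 2 * v 0 - u 0 * v 2),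
    conj' (u 0 * v 1 - u 1 * v 0)] with hwdef
  have hcu : ∀ j, conj' (u j) * u j = ((B j 0 : ℝ) : ℂ) := by
    intro j
    rw [hudef]
    simp only [Complex.conj_ofReal, ← Complex.ofReal_mul]
    rw [Real.mul_self_sqrt (hpos j 0)]
  have hcv : ∀ j, conj' (v j) * v j = ((B j 1 : ℝ) : ℂ) := by
    intro j
    rw [mul_comm, Complex.mul_conj, ← Complex.sq_norm, hv1 j, Real.sq_sqrt (hpos j 1)]
  have hcuv : ∀ j, conj' (u j) * v j = z j := by
    intro j
    rw [hudef]
    simp only [Complex.conj_ofReal]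
    exact hv2 j
  have hcol0 : B 0 0 + B 1 0 + B 2 0 = 1 := by
    have := hcol 0; rwa [Fin.sum_univ_three] at this
  have hcol1 : B 0 1 + B 1 1 + B 2 1 = 1 := by
    have := hcol 1; rwa [Fin.sum_univ_three] at this
  have hu3 : conj' (u 0) * u 0 + conj' (u 1) * u 1 + conj' (u 2) * u 2 = 1 := by
    rw [hcu 0, hcu 1, hcu 2, ← Complex.ofReal_add, ← Complex.ofReal_add, hcol0,
      Complex.ofReal_one]
  have hv3 : conj' (v 0) * v 0 + conj' (v 1) * v 1 + conj' (v 2) * v 2 = 1 := by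
    rw [hcv 0, hcv 1, hcv 2, ← Complex.ofReal_add, ← Complex.ofReal_add, hcol1,
      Complex.ofReal_one]
  have huv3 : conj' (u 0) * v 0 + conj' (u 1) * v 1 + conj' (u 2) * v 2 = 0 := by
    rw [hcuv 0, hcuv 1, hcuv 2]
    simpa [hzdef] using hz
  have hmem := unitary_cols u v w (by rw [hwdef]; rfl) (by rw [hwdef]; rfl) (by rw [hwdef]; rfl)
    hu3 hv3 huv3
  set U : Matrix (Fin 3) (Fin 3) ℂ := Matrix.of fun j k => ![u j, v j, w j] k with hUdef
  have hU0 : ∀ j, U j 0 = u j := fun j => rfl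
  have hU1 : ∀ j, U j 1 = v j := fun j => rfl
  have hU2 : ∀ j, U j 2 = w j := fun j => rfl
  -- rows are normalised
  have hUU : U * star U = 1 := Matrix.mem_unitaryGroup_iff.mp hmem
  have hw2 : ∀ j, ‖w j‖ ^ 2 = B j 2 := by
    intro j
    have hjj := congrArg (fun M => M j j) hUU
    simp only [Matrix.mul_apply, Fin.sum_univ_three, Matrix.star_apply, Matrix.one_apply_eq,
      Complex.star_def] at hjj
    rw [hU0, hU1, hU2] at hjj
    rw [Complex.mul_conj, Complex.mul_conj, Complex.mul_conj] at hjj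
    have hre : Complex.normSq (u j) + Complex.normSq (v j) + Complex.normSq (w j) = 1 := by
      have := congrArg Complex.re hjj
      simpa using this
    have hnu : Complex.normSq (u j) = B j 0 := by
      rw [← Complex.sq_norm, hudef]
      simp only [Complex.norm_real, Real.norm_eq_abs]
      rw [_root_.sq_abs, Real.sq_sqrt (hpos j 0)]
    have hnv : Complex.normSq (v j) = B j 1 := by
      rw [← Complex.sq_norm, hv1 j, Real.sq_sqrt (hpos j 1)]
    have hrowj : B j 0 + B j 1 + B j 2 = 1 := by
      have := hrow j; rwa [Fin.sum_univ_three] at this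
    rw [Complex.sq_norm]
    rw [hnu, hnv] at hre
    linarith
  refine ⟨⟨hpos, hrow, hcol⟩, U, hmem, ?_⟩
  intro j k
  fin_cases k
  · show B j 0 = ‖U j 0‖ ^ 2
    rw [hU0, hudef]
    simp only [Complex.norm_real, Real.norm_eq_abs]
    rw [_root_.sq_abs, Real.sq_sqrt (hpos j 0)]
  · show B j 1 = ‖U j 1‖ ^ 2
    rw [hU1, hv1 j, Real.sq_sqrt (hpos j 1)]
  · show B j 2 = ‖U j 2‖ ^ 2
    rw [hU2, hw2 j]
lemma colTri_pair {B : Matrix (Fin 3) (Fin 3) ℝ} {k l : Fin 3} (h : colTri B k l) :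
    Real.sqrt (B 0 k * B 0 l) ≤ Real.sqrt (B 1 k * B 1 l) + Real.sqrt (B 2 k * B 2 l) ∧
    Real.sqrt (B 1 k * B 1 l) ≤ Real.sqrt (B 0 k * B 0 l) + Real.sqrt (B 2 k * B 2 l) ∧
    Real.sqrt (B 2 k * B 2 l) ≤ Real.sqrt (B 0 k * B 0 l) + Real.sqrt (B 1 k * B 1 l) := by
  have h0 := h 0; have h1 := h 1; have h2 := h 2
  rw [Fin.sum_univ_three] at h0 h1 h2
  exact ⟨by linarith, by linarith, by linarith⟩

lemma pair_colTri {B : Matrix (Fin 3) (Fin 3) ℝ} {k l : Fin 3}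
    (h0 : Real.sqrt (B 0 k * B 0 l) ≤ Real.sqrt (B 1 k * B 1 l) + Real.sqrt (B 2 k * B 2 l))
    (h1 : Real.sqrt (B 1 k * B 1 l) ≤ Real.sqrt (B 0 k * B 0 l) + Real.sqrt (B 2 k * B 2 l))
    (h2 : Real.sqrt (B 2 k * B 2 l) ≤ Real.sqrt (B 0 k * B 0 l) + Real.sqrt (B 1 k * B 1 l)) :
    colTri B k l := by
  intro j₀
  rw [Fin.sum_univ_three]
  fin_cases j₀
  · show 2 * Real.sqrt (B 0 k * B 0 l) ≤ _; linarith
  · show 2 * Real.sqrt (B 1 k * B 1 l) ≤ _; linarith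
  · show 2 * Real.sqrt (B 2 k * B 2 l) ≤ _; linarith

/-- Necessity: a unistochastic matrix satisfies all column triangle conditions. -/
lemma uni_colTri {B : Matrix (Fin 3) (Fin 3) ℝ} (hU : Unistochastic B) (k l : Fin 3)
    (hkl : k ≠ l) : colTri B k l := by
  obtain ⟨hB, U, hmem, habs⟩ := hU
  have hsUU : star U * U = 1 := Matrix.mem_unitaryGroup_iff'.mp hmem
  have hsum : conj' (U 0 k) * U 0 l + conj' (U 1 k) * U 1 l + conj' (U 2 k) * U 2 l = 0 := by
    have h := congrArg (fun M => M k l) hsUU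
    simp only [Matrix.mul_apply, Fin.sum_univ_three, Matrix.star_apply,
      Matrix.one_apply, if_neg hkl, Complex.star_def] at h
    exact h
  have habs' : ∀ j : Fin 3, ‖conj' (U j k) * U j l‖ = Real.sqrt (B j k * B j l) := by
    intro j
    rw [norm_mul, Complex.norm_conj, Real.sqrt_mul (hB.1 j k), habs j k, habs j l,
      Real.sqrt_sq (norm_nonneg _), Real.sqrt_sq (norm_nonneg _)]
  have tri : ∀ a b c : Fin 3,
      conj' (U a k) * U a l + conj' (U b k) * U b l + conj' (U c k) * U c l = 0 →
      Real.sqrt (B a k * B a l) ≤ Real.sqrt (B b k * B b l) + Real.sqrt (B c k * B c l) := by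
    intro a b c h
    have e : conj' (U a k) * U a l = -(conj' (U b k) * U b l + conj' (U c k) * U c l) := by
      linear_combination h
    calc Real.sqrt (B a k * B a l) = ‖conj' (U a k) * U a l‖ := (habs' a).symm
    _ = ‖conj' (U b k) * U b l + conj' (U c k) * U c l‖ := by rw [e, norm_neg]
    _ ≤ ‖conj' (U b k) * U b l‖ + ‖conj' (U c k) * U c l‖ :=
        norm_add_le _ _
    _ = _ := by rw [habs' b, habs' c]
  exact pair_colTri (tri 0 1 2 (by linear_combination hsum))
    (tri 1 0 2 (by linear_combination hsum)) (tri 2 0 1 (by linear_combination hsum))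

/-- The product of bistochastic matrices is bistochastic. -/
lemma bistoch_mul {A B : Matrix (Fin 3) (Fin 3) ℝ} (hA : Bistochastic A) (hB : Bistochastic B) :
    Bistochastic (A * B) := by
  refine ⟨?_, ?_, ?_⟩
  · intro j k
    rw [Matrix.mul_apply]
    exact Finset.sum_nonneg fun m _ => mul_nonneg (hA.1 j m) (hB.1 m k)
  · intro j
    simp only [Matrix.mul_apply]
    rw [Finset.sum_comm]
    simp_rw [← Finset.mul_sum, hB.2.1, mul_one]
    exact hA.2.1 j
  · intro k
    simp only [Matrix.mul_apply]
    rw [Finset.sum_comm]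
    simp_rw [← Finset.sum_mul, hA.2.2, one_mul]
    exact hB.2.2 k
lemma elem_diag {E : Matrix (Fin 3) (Fin 3) ℝ} (hE : Elementary E) :
    Bistochastic E ∧ ∃ c : Fin 3, E c c = 1 := by
  obtain ⟨hbi, S, hcard, hdiag⟩ := hE
  have : S.Nonempty := Finset.card_pos.mp (by omega)
  obtain ⟨c, hc⟩ := this
  exact ⟨hbi, c, hdiag c hc⟩

lemma step_left {E B : Matrix (Fin 3) (Fin 3) ℝ} (hE : Elementary E) (hB : Unistochastic B) :
    Unistochastic (E * B) := by
  obtain ⟨hEb, c, hc⟩ := elem_diag hE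
  have hBb := hB.1
  apply uni_of_tri (bistoch_mul hEb hBb)
  obtain ⟨T0, T1, T2⟩ := colTri_pair (uni_colTri hB 0 1 (by decide))
  have P := hEb.1
  have R : ∀ j : Fin 3, E j 0 + E j 1 + E j 2 = 1 := fun j => by
    have := hEb.2.1 j; rwa [Fin.sum_univ_three] at this
  have C : ∀ k : Fin 3, E 0 k + E 1 k + E 2 k = 1 := fun k => by
    have := hEb.2.2 k; rwa [Fin.sum_univ_three] at this
  have sq0 := Real.sqrt_nonneg (B 0 0 * B 0 1)
  have sq1 := Real.sqrt_nonneg (B 1 0 * B 1 1)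
  have sq2 := Real.sqrt_nonneg (B 2 0 * B 2 1)
  fin_cases c
  · -- c = 0 : rows 1, 2 mixed
    have h00 : E 0 0 = 1 := hc
    have h01 : E 0 1 = 0 := by linarith [R 0, P 0 1, P 0 2]
    have h02 : E 0 2 = 0 := by linarith [R 0, P 0 1, P 0 2]
    have h10 : E 1 0 = 0 := by linarith [C 0, P 1 0, P 2 0]
    have h20 : E 2 0 = 0 := by linarith [C 0, P 1 0, P 2 0]
    have h12 : E 1 2 = 1 - E 1 1 := by linarith [R 1]
    have h21 : E 2 1 = 1 - E 1 1 := by linarith [C 1, h01]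
    have h22 : E 2 2 = E 1 1 := by linarith [R 2, h20, h21]
    have ht0 : 0 ≤ E 1 1 := P 1 1
    have ht1 : E 1 1 ≤ 1 := by linarith [P 1 2, h12]
    have e0 : ∀ k, (E*B) 0 k = B 0 k := fun k => by
      rw [Matrix.mul_apply, Fin.sum_univ_three, h00, h01, h02]; ring
    have e1 : ∀ k, (E*B) 1 k = E 1 1 * B 1 k + (1 - E 1 1) * B 2 k := fun k => by
      rw [Matrix.mul_apply, Fin.sum_univ_three, h10, h12]; ring
    have e2 : ∀ k, (E*B) 2 k = (1 - E 1 1) * B 1 k + E 1 1 * B 2 k := fun k => by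
      rw [Matrix.mul_apply, Fin.sum_univ_three, h20, h21, h22]; ring
    obtain ⟨L1, L2, L3⟩ := left_tri (hBb.1 1 0) (hBb.1 1 1) (hBb.1 2 0) (hBb.1 2 1) ht0 ht1 sq0
      (by linarith) (by linarith) (by linarith)
    refine pair_colTri ?_ ?_ ?_
    · rw [e0 0, e0 1, e1 0, e1 1, e2 0, e2 1]; linarith
    · rw [e0 0, e0 1, e1 0, e1 1, e2 0, e2 1]; linarith
    · rw [e0 0, e0 1, e1 0, e1 1, e2 0, e2 1]; linarith
  · -- c = 1 : rows 0, 2 mixed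
    have h11 : E 1 1 = 1 := hc
    have h10 : E 1 0 = 0 := by linarith [R 1, P 1 0, P 1 2]
    have h12 : E 1 2 = 0 := by linarith [R 1, P 1 0, P 1 2]
    have h01 : E 0 1 = 0 := by linarith [C 1, P 0 1, P 2 1]
    have h21 : E 2 1 = 0 := by linarith [C 1, P 0 1, P 2 1]
    have h02 : E 0 2 = 1 - E 0 0 := by linarith [R 0]
    have h20 : E 2 0 = 1 - E 0 0 := by linarith [C 0, h10]
    have h22 : E 2 2 = E 0 0 := by linarith [R 2, h20, h21]
    have ht0 : 0 ≤ E 0 0 := P 0 0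
    have ht1 : E 0 0 ≤ 1 := by linarith [P 0 2, h02]
    have e1 : ∀ k, (E*B) 1 k = B 1 k := fun k => by
      rw [Matrix.mul_apply, Fin.sum_univ_three, h11, h10, h12]; ring
    have e0 : ∀ k, (E*B) 0 k = E 0 0 * B 0 k + (1 - E 0 0) * B 2 k := fun k => by
      rw [Matrix.mul_apply, Fin.sum_univ_three, h01, h02]; ring
    have e2 : ∀ k, (E*B) 2 k = (1 - E 0 0) * B 0 k + E 0 0 * B 2 k := fun k => by
      rw [Matrix.mul_apply, Fin.sum_univ_three, h20, h21, h22]; ring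
    obtain ⟨L1, L2, L3⟩ := left_tri (hBb.1 0 0) (hBb.1 0 1) (hBb.1 2 0) (hBb.1 2 1) ht0 ht1 sq1
      (by linarith) (by linarith) (by linarith)
    refine pair_colTri ?_ ?_ ?_
    · rw [e0 0, e0 1, e1 0, e1 1, e2 0, e2 1]; linarith
    · rw [e0 0, e0 1, e1 0, e1 1, e2 0, e2 1]; linarith
    · rw [e0 0, e0 1, e1 0, e1 1, e2 0, e2 1]; linarith
  · -- c = 2 : rows 0, 1 mixed
    have h22 : E 2 2 = 1 := hc
    have h20 : E 2 0 = 0 := by linarith [R 2, P 2 0, P 2 1]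
    have h21 : E 2 1 = 0 := by linarith [R 2, P 2 0, P 2 1]
    have h02 : E 0 2 = 0 := by linarith [C 2, P 0 2, P 1 2]
    have h12 : E 1 2 = 0 := by linarith [C 2, P 0 2, P 1 2]
    have h01 : E 0 1 = 1 - E 0 0 := by linarith [R 0]
    have h10 : E 1 0 = 1 - E 0 0 := by linarith [C 0, h20]
    have h11 : E 1 1 = E 0 0 := by linarith [R 1, h10, h12]
    have ht0 : 0 ≤ E 0 0 := P 0 0
    have ht1 : E 0 0 ≤ 1 := by linarith [P 0 1, h01]
    have e2 : ∀ k, (E*B) 2 k = B 2 k := fun k => by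
      rw [Matrix.mul_apply, Fin.sum_univ_three, h22, h20, h21]; ring
    have e0 : ∀ k, (E*B) 0 k = E 0 0 * B 0 k + (1 - E 0 0) * B 1 k := fun k => by
      rw [Matrix.mul_apply, Fin.sum_univ_three, h01, h02]; ring
    have e1 : ∀ k, (E*B) 1 k = (1 - E 0 0) * B 0 k + E 0 0 * B 1 k := fun k => by
      rw [Matrix.mul_apply, Fin.sum_univ_three, h10, h11, h12]; ring
    obtain ⟨L1, L2, L3⟩ := left_tri (hBb.1 0 0) (hBb.1 0 1) (hBb.1 1 0) (hBb.1 1 1) ht0 ht1 sq2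
      (by linarith) (by linarith) (by linarith)
    refine pair_colTri ?_ ?_ ?_
    · rw [e0 0, e0 1, e1 0, e1 1, e2 0, e2 1]; linarith
    · rw [e0 0, e0 1, e1 0, e1 1, e2 0, e2 1]; linarith
    · rw [e0 0, e0 1, e1 0, e1 1, e2 0, e2 1]; linarith
lemma scale_tri {c s0 s1 s2 : ℝ} (hc : 0 ≤ c) (h : s0 ≤ s1 + s2) : c*s0 ≤ c*s1 + c*s2 := by
  nlinarith

lemma sqrt_comb1 {t x y z : ℝ} (ht0 : 0 ≤ t) (ht1 : t ≤ 1) (hx : 0 ≤ x) (hy : 0 ≤ y)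
    (hz : 0 ≤ z) :
    Real.sqrt (x*(t*y+(1-t)*z)) =
      Real.sqrt ((Real.sqrt t*Real.sqrt (x*y))^2 + (Real.sqrt (1-t)*Real.sqrt (x*z))^2) := by
  congr 1
  rw [mul_pow, mul_pow, Real.sq_sqrt ht0, Real.sq_sqrt (by linarith : (0:ℝ) ≤ 1-t),
    Real.sq_sqrt (mul_nonneg hx hy), Real.sq_sqrt (mul_nonneg hx hz)]
  ring

lemma sqrt_comb2 {t x y : ℝ} (ht0 : 0 ≤ t) (ht1 : t ≤ 1) (hx : 0 ≤ x) (hy : 0 ≤ y) :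
    Real.sqrt ((t*x+(1-t)*y)*((1-t)*x+t*y)) =
      Real.sqrt (Real.sqrt (x*y)^2 + (Real.sqrt (t*(1-t))*|x-y|)^2) := by
  congr 1
  rw [mul_pow, Real.sq_sqrt (mul_nonneg ht0 (by linarith : (0:ℝ) ≤ 1-t)),
    Real.sq_sqrt (mul_nonneg hx hy), _root_.sq_abs]
  ring

lemma step_right {E B : Matrix (Fin 3) (Fin 3) ℝ} (hE : Elementary E) (hB : Unistochastic B) :
    Unistochastic (B * E) := by
  obtain ⟨hEb, c, hc⟩ := elem_diag hE
  have hBb := hB.1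
  apply uni_of_tri (bistoch_mul hBb hEb)
  have P := hEb.1
  have Q := hBb.1
  have R : ∀ j : Fin 3, E j 0 + E j 1 + E j 2 = 1 := fun j => by
    have := hEb.2.1 j; rwa [Fin.sum_univ_three] at this
  have C : ∀ k : Fin 3, E 0 k + E 1 k + E 2 k = 1 := fun k => by
    have := hEb.2.2 k; rwa [Fin.sum_univ_three] at this
  fin_cases c
  · -- c = 0 : columns 1, 2 of B mixed; t = E 1 1
    obtain ⟨T0, T1, T2⟩ := colTri_pair (uni_colTri hB 0 1 (by decide))
    obtain ⟨S0, S1, S2⟩ := colTri_pair (uni_colTri hB 0 2 (by decide))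
    have h00 : E 0 0 = 1 := hc
    have h01 : E 0 1 = 0 := by linarith [R 0, P 0 1, P 0 2]
    have h02 : E 0 2 = 0 := by linarith [R 0, P 0 1, P 0 2]
    have h10 : E 1 0 = 0 := by linarith [C 0, P 1 0, P 2 0]
    have h20 : E 2 0 = 0 := by linarith [C 0, P 1 0, P 2 0]
    have h21 : E 2 1 = 1 - E 1 1 := by linarith [C 1, h01]
    have ht0 : 0 ≤ E 1 1 := P 1 1
    have ht1 : E 1 1 ≤ 1 := by linarith [P 2 1, h21]
    set t := E 1 1 with htdef
    have m : ∀ j : Fin 3, (B*E) j 0 * (B*E) j 1 = B j 0 * (t * B j 1 + (1-t) * B j 2) := by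
      intro j
      rw [Matrix.mul_apply, Matrix.mul_apply, Fin.sum_univ_three, Fin.sum_univ_three,
        h00, h01, h10, h20, h21]
      ring
    have key : ∀ j : Fin 3, Real.sqrt ((B*E) j 0 * (B*E) j 1) =
        Real.sqrt ((Real.sqrt t*Real.sqrt (B j 0*B j 1))^2 +
          (Real.sqrt (1-t)*Real.sqrt (B j 0*B j 2))^2) := by
      intro j
      rw [m j]
      exact sqrt_comb1 ht0 ht1 (Q j 0) (Q j 1) (Q j 2)
    refine pair_colTri ?_ ?_ ?_ <;> rw [key 0, key 1, key 2] <;>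
      apply tri2 (by positivity) (by positivity) (by positivity) (by positivity)
        (by positivity) (by positivity)
    · exact scale_tri (Real.sqrt_nonneg t) T0
    · exact scale_tri (Real.sqrt_nonneg (1-t)) S0
    · exact scale_tri (Real.sqrt_nonneg t) T1
    · exact scale_tri (Real.sqrt_nonneg (1-t)) S1
    · exact scale_tri (Real.sqrt_nonneg t) T2
    · exact scale_tri (Real.sqrt_nonneg (1-t)) S2
  · -- c = 1 : columns 0, 2 of B mixed; t = E 0 0
    obtain ⟨T0, T1, T2⟩ := colTri_pair (uni_colTri hB 0 1 (by decide))
    obtain ⟨S0, S1, S2⟩ := colTri_pair (uni_colTri hB 2 1 (by decide))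
    have h11 : E 1 1 = 1 := hc
    have h10 : E 1 0 = 0 := by linarith [R 1, P 1 0, P 1 2]
    have h12 : E 1 2 = 0 := by linarith [R 1, P 1 0, P 1 2]
    have h01 : E 0 1 = 0 := by linarith [C 1, P 0 1, P 2 1]
    have h21 : E 2 1 = 0 := by linarith [C 1, P 0 1, P 2 1]
    have h20 : E 2 0 = 1 - E 0 0 := by linarith [C 0, h10]
    have ht0 : 0 ≤ E 0 0 := P 0 0
    have ht1 : E 0 0 ≤ 1 := by linarith [P 2 0, h20]
    set t := E 0 0 with htdef
    have m : ∀ j : Fin 3, (B*E) j 0 * (B*E) j 1 = B j 1 * (t * B j 0 + (1-t) * B j 2) := by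
      intro j
      rw [Matrix.mul_apply, Matrix.mul_apply, Fin.sum_univ_three, Fin.sum_univ_three,
        h11, h01, h21, h10, h20]
      ring
    have key : ∀ j : Fin 3, Real.sqrt ((B*E) j 0 * (B*E) j 1) =
        Real.sqrt ((Real.sqrt t*Real.sqrt (B j 1*B j 0))^2 +
          (Real.sqrt (1-t)*Real.sqrt (B j 1*B j 2))^2) := by
      intro j
      rw [m j]
      exact sqrt_comb1 ht0 ht1 (Q j 1) (Q j 0) (Q j 2)
    have comm : ∀ j : Fin 3, B j 1 * B j 0 = B j 0 * B j 1 := fun j => mul_comm _ _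
    have comm2 : ∀ j : Fin 3, B j 1 * B j 2 = B j 2 * B j 1 := fun j => mul_comm _ _
    refine pair_colTri ?_ ?_ ?_ <;> rw [key 0, key 1, key 2] <;>
      simp only [comm, comm2] <;>
      apply tri2 (by positivity) (by positivity) (by positivity) (by positivity)
        (by positivity) (by positivity)
    · exact scale_tri (Real.sqrt_nonneg t) T0
    · exact scale_tri (Real.sqrt_nonneg (1-t)) S0
    · exact scale_tri (Real.sqrt_nonneg t) T1
    · exact scale_tri (Real.sqrt_nonneg (1-t)) S1
    · exact scale_tri (Real.sqrt_nonneg t) T2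
    · exact scale_tri (Real.sqrt_nonneg (1-t)) S2
  · -- c = 2 : columns 0, 1 of B mixed; t = E 0 0
    obtain ⟨T0, T1, T2⟩ := colTri_pair (uni_colTri hB 0 1 (by decide))
    have h22 : E 2 2 = 1 := hc
    have h20 : E 2 0 = 0 := by linarith [R 2, P 2 0, P 2 1]
    have h21 : E 2 1 = 0 := by linarith [R 2, P 2 0, P 2 1]
    have h02 : E 0 2 = 0 := by linarith [C 2, P 0 2, P 1 2]
    have h12 : E 1 2 = 0 := by linarith [C 2, P 0 2, P 1 2]
    have h01 : E 0 1 = 1 - E 0 0 := by linarith [R 0]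
    have h10 : E 1 0 = 1 - E 0 0 := by linarith [C 0, h20]
    have h11 : E 1 1 = E 0 0 := by linarith [R 1, h10, h12]
    have ht0 : 0 ≤ E 0 0 := P 0 0
    have ht1 : E 0 0 ≤ 1 := by linarith [P 0 1, h01]
    set t := E 0 0 with htdef
    have m : ∀ j : Fin 3, (B*E) j 0 * (B*E) j 1 =
        (t * B j 0 + (1-t) * B j 1) * ((1-t) * B j 0 + t * B j 1) := by
      intro j
      rw [Matrix.mul_apply, Matrix.mul_apply, Fin.sum_univ_three, Fin.sum_univ_three,
        h20, h21, h01, h10, h11]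
      ring
    have key : ∀ j : Fin 3, Real.sqrt ((B*E) j 0 * (B*E) j 1) =
        Real.sqrt (Real.sqrt (B j 0*B j 1)^2 + (Real.sqrt (t*(1-t))*|B j 0 - B j 1|)^2) := by
      intro j
      rw [m j]
      exact sqrt_comb2 ht0 ht1 (Q j 0) (Q j 1)
    have hcol0 : B 0 0 + B 1 0 + B 2 0 = 1 := by
      have := hBb.2.2 0; rwa [Fin.sum_univ_three] at this
    have hcol1 : B 0 1 + B 1 1 + B 2 1 = 1 := by
      have := hBb.2.2 1; rwa [Fin.sum_univ_three] at this
    have habs : ∀ a b c : Fin 3, (B a 0 - B a 1) = -((B b 0 - B b 1) + (B c 0 - B c 1)) →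
        |B a 0 - B a 1| ≤ |B b 0 - B b 1| + |B c 0 - B c 1| := by
      intro a b c h
      rw [h, abs_neg]
      exact abs_add_le _ _
    have K0 := Real.sqrt_nonneg (t*(1-t))
    refine pair_colTri ?_ ?_ ?_ <;> rw [key 0, key 1, key 2] <;>
      apply tri2 (Real.sqrt_nonneg _) (Real.sqrt_nonneg _) (Real.sqrt_nonneg _)
        (by positivity) (by positivity) (by positivity)
    · exact T0
    · exact scale_tri K0 (habs 0 1 2 (by linarith))
    · exact T1
    · exact scale_tri K0 (habs 1 0 2 (by linarith))
    · exact T2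
    · exact scale_tri K0 (habs 2 0 1 (by linarith))
lemma uni_iff {B : Matrix (Fin 3) (Fin 3) ℝ} :
    Unistochastic B ↔ Bistochastic B ∧ colTri B 0 1 :=
  ⟨fun h => ⟨h.1, uni_colTri h 0 1 (by decide)⟩, fun h => uni_of_tri h.1 h.2⟩

lemma closed_uni : IsClosed {B : Matrix (Fin 3) (Fin 3) ℝ | Bistochastic B ∧ colTri B 0 1} := by
  have hcont : ∀ j k : Fin 3, Continuous fun B : Matrix (Fin 3) (Fin 3) ℝ => B j k :=
    fun j k => (continuous_apply k).comp (continuous_apply j)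
  have hset : {B : Matrix (Fin 3) (Fin 3) ℝ | Bistochastic B ∧ colTri B 0 1} =
      ((⋂ j, ⋂ k, {B : Matrix (Fin 3) (Fin 3) ℝ | 0 ≤ B j k}) ∩
        ((⋂ j, {B : Matrix (Fin 3) (Fin 3) ℝ | ∑ k, B j k = 1}) ∩
          (⋂ k, {B : Matrix (Fin 3) (Fin 3) ℝ | ∑ j, B j k = 1}))) ∩
        (⋂ j₀, {B : Matrix (Fin 3) (Fin 3) ℝ |
          2 * Real.sqrt (B j₀ 0 * B j₀ 1) ≤ ∑ j, Real.sqrt (B j 0 * B j 1)}) := by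
    ext B
    simp only [Set.mem_setOf_eq, Set.mem_inter_iff, Set.mem_iInter, Bistochastic, colTri] <;>
      tauto
  rw [hset]
  refine IsClosed.inter (IsClosed.inter ?_ (IsClosed.inter ?_ ?_)) ?_
  · exact isClosed_iInter fun j => isClosed_iInter fun k =>
      isClosed_le continuous_const (hcont j k)
  · exact isClosed_iInter fun j =>
      isClosed_eq (continuous_finset_sum _ fun k _ => hcont j k) continuous_const
  · exact isClosed_iInter fun k =>
      isClosed_eq (continuous_finset_sum _ fun j _ => hcont j k) continuous_const
  · refine isClosed_iInter fun j₀ => isClosed_le ?_ ?_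
    · exact continuous_const.mul (Real.continuous_sqrt.comp ((hcont j₀ 0).mul (hcont j₀ 1)))
    · exact continuous_finset_sum _ fun j _ =>
        Real.continuous_sqrt.comp ((hcont j 0).mul (hcont j 1))

lemma prod_uni_left {B : Matrix (Fin 3) (Fin 3) ℝ} (hB : Unistochastic B)
    (L : List (Matrix (Fin 3) (Fin 3) ℝ)) (hL : ∀ E ∈ L, Elementary E) :
    Unistochastic (L.prod * B) := by
  induction L with
  | nil => simpa using hB
  | cons E L ih =>
    rw [List.prod_cons, mul_assoc]
    exact step_left (hL E (List.mem_cons_self)) (ih fun F hF => hL F (List.mem_cons_of_mem E hF))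

lemma prod_uni_right (L : List (Matrix (Fin 3) (Fin 3) ℝ)) (hL : ∀ E ∈ L, Elementary E) :
    ∀ B : Matrix (Fin 3) (Fin 3) ℝ, Unistochastic B → Unistochastic (B * L.prod) := by
  induction L with
  | nil => intro B hB; simpa using hB
  | cons E L ih =>
    intro B hB
    rw [List.prod_cons, ← mul_assoc]
    exact ih (fun F hF => hL F (List.mem_cons_of_mem E hF)) _
      (step_right (hL E (List.mem_cons_self)) hB)

lemma fact_mul {A B : Matrix (Fin 3) (Fin 3) ℝ} (hA : Factorisable A) (hB : Unistochastic B) :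
    Unistochastic (A * B) ∧ Unistochastic (B * A) := by
  constructor
  · have hsub : closure { M : Matrix (Fin 3) (Fin 3) ℝ |
        ∃ L : List (Matrix (Fin 3) (Fin 3) ℝ), (∀ E ∈ L, Elementary E) ∧ M = L.prod } ⊆
        {M : Matrix (Fin 3) (Fin 3) ℝ | Unistochastic (M * B)} := by
      apply closure_minimal
      · rintro M ⟨L, hL, rfl⟩
        exact prod_uni_left hB L hL
      · have : {M : Matrix (Fin 3) (Fin 3) ℝ | Unistochastic (M * B)} =
            (fun M : Matrix (Fin 3) (Fin 3) ℝ => M * B) ⁻¹'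
              {C : Matrix (Fin 3) (Fin 3) ℝ | Bistochastic C ∧ colTri C 0 1} := by
          ext M; simp only [Set.mem_setOf_eq, Set.mem_preimage, uni_iff]
        rw [this]
        exact closed_uni.preimage (Continuous.matrix_mul continuous_id continuous_const)
    exact hsub hA
  · have hsub : closure { M : Matrix (Fin 3) (Fin 3) ℝ |
        ∃ L : List (Matrix (Fin 3) (Fin 3) ℝ), (∀ E ∈ L, Elementary E) ∧ M = L.prod } ⊆
        {M : Matrix (Fin 3) (Fin 3) ℝ | Unistochastic (B * M)} := by
      apply closure_minimal
      · rintro M ⟨L, hL, rfl⟩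
        exact prod_uni_right L hL B hB
      · have : {M : Matrix (Fin 3) (Fin 3) ℝ | Unistochastic (B * M)} =
            (fun M : Matrix (Fin 3) (Fin 3) ℝ => B * M) ⁻¹'
              {C : Matrix (Fin 3) (Fin 3) ℝ | Bistochastic C ∧ colTri C 0 1} := by
          ext M; simp only [Set.mem_setOf_eq, Set.mem_preimage, uni_iff]
        rw [this]
        exact closed_uni.preimage (Continuous.matrix_mul continuous_const continuous_id)
    exact hsub hA

lemma star_shape {B : Matrix (Fin 3) (Fin 3) ℝ} (hB : Unistochastic B) {lam : ℝ}
    (h0 : 0 ≤ lam) (h1 : lam ≤ 1) :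
    Unistochastic ((1 - lam) • B + lam • flatMatrix 3) := by
  have hBb := hB.1
  set C := (1 - lam) • B + lam • flatMatrix 3 with hC
  have hent : ∀ j k : Fin 3, C j k = (1-lam) * B j k + lam/3 := by
    intro j k
    rw [hC]
    simp only [Matrix.add_apply, Matrix.smul_apply, flatMatrix, Matrix.of_apply,
      smul_eq_mul]
    push_cast
    ring
  have hpos : ∀ j k : Fin 3, 0 ≤ C j k := by
    intro j k
    rw [hent]
    have := hBb.1 j k
    nlinarith
  have hRB : ∀ j : Fin 3, B j 0 + B j 1 + B j 2 = 1 := fun j => by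
    have := hBb.2.1 j; rwa [Fin.sum_univ_three] at this
  have hCB : ∀ k : Fin 3, B 0 k + B 1 k + B 2 k = 1 := fun k => by
    have := hBb.2.2 k; rwa [Fin.sum_univ_three] at this
  have hbi : Bistochastic C := by
    refine ⟨hpos, ?_, ?_⟩
    · intro j
      rw [Fin.sum_univ_three, hent, hent, hent]
      linear_combination (1-lam) * hRB j
    · intro k
      rw [Fin.sum_univ_three, hent, hent, hent]
      linear_combination (1-lam) * hCB k
  apply uni_of_tri hbi
  obtain ⟨T0, T1, T2⟩ := colTri_pair (uni_colTri hB 0 1 (by decide))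
  have ha : (0:ℝ) ≤ 1 - lam := by linarith
  have hb : (0:ℝ) ≤ lam/3 := by linarith
  refine pair_colTri ?_ ?_ ?_ <;> rw [hent 0 0, hent 0 1, hent 1 0, hent 1 1, hent 2 0, hent 2 1]
  · exact star_tri ha hb (hBb.1 0 0) (hBb.1 1 0) (hBb.1 2 0) (hBb.1 0 1) (hBb.1 1 1)
      (hBb.1 2 1) (hCB 0) (hCB 1) T0
  · exact star_tri ha hb (hBb.1 1 0) (hBb.1 0 0) (hBb.1 2 0) (hBb.1 1 1) (hBb.1 0 1)
      (hBb.1 2 1) (by linarith [hCB 0]) (by linarith [hCB 1]) T1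
  · exact star_tri ha hb (hBb.1 2 0) (hBb.1 0 0) (hBb.1 1 0) (hBb.1 2 1) (hBb.1 0 1)
      (hBb.1 1 1) (by linarith [hCB 0]) (by linarith [hCB 1]) T2

/-- The set of `3 × 3` unistochastic matrices is closed under multiplication by
factorisable matrices, and is star-shaped with respect to the flat matrix `W₃`. -/
theorem unistochastic3_structure :
    (∀ A B : Matrix (Fin 3) (Fin 3) ℝ, Factorisable A → Bistochastic A → Unistochastic B →
      Unistochastic (A * B) ∧ Unistochastic (B * A)) ∧
    (∀ B : Matrix (Fin 3) (Fin 3) ℝ, Unistochastic B → ∀ lam ∈ Set.Icc (0 : ℝ) 1,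
      Unistochastic ((1 - lam) • B + lam • flatMatrix 3)) := by
  constructor
  · intro A B hA _ hB
    exact fact_mul hA hB
  · intro B hB lam hlam
    exact star_shape hB hlam.1 hlam.2
end

section
/- The 3×3 matrix Q with all diagonal entries equal to 0 and all off-diagonal entries equal to 1/2 is bistochastic but not unistochastic: there is no 3×3 unitary matrix U with |U_{jk}|² = Q_{jk} for all j,k. -/
/-- The `3 × 3` matrix `Q` with zero diagonal and all off-diagonal entries `1/2`. -/
noncomputable def Qmatrix : Matrix (Fin 3) (Fin 3) ℝ :=
  Matrix.of fun j k => if j = k then 0 else 1 / 2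

/-- `Q` is bistochastic but not unistochastic: no `3 × 3` unitary `U` satisfies
`|U j k|² = Q j k` for all `j, k`. -/
theorem Qmatrix_bistochastic_not_unistochastic :
    Bistochastic Qmatrix ∧
    ¬ ∃ U ∈ Matrix.unitaryGroup (Fin 3) ℂ, ∀ j k, ‖U j k‖ ^ 2 = Qmatrix j k := by
  constructor
  · refine ⟨?_, ?_, ?_⟩
    · intro j k
      simp only [Qmatrix, Matrix.of_apply]
      split <;> norm_num
    · intro j
      fin_cases j <;> simp [Qmatrix, Fin.sum_univ_three] <;> norm_num
    · intro k
      fin_cases k <;> simp [Qmatrix, Fin.sum_univ_three] <;> norm_num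
  · rintro ⟨U, hU, h⟩
    have hU' : star U * U = 1 := Matrix.UnitaryGroup.star_mul_self ⟨U, hU⟩
    have h00 : U 0 0 = 0 := by
      have := h 0 0
      simp [Qmatrix] at this
      simpa using this
    have h11 : U 1 1 = 0 := by
      have := h 1 1
      simp [Qmatrix] at this
      simpa using this
    have h20 : ‖U 2 0‖ ^ 2 = 1 / 2 := by
      have := h 2 0; simpa [Qmatrix] using this
    have h21 : ‖U 2 1‖ ^ 2 = 1 / 2 := by
      have := h 2 1; simpa [Qmatrix] using this
    have key : (star U * U) 0 1 = (1 : Matrix (Fin 3) (Fin 3) ℂ) 0 1 := by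
      rw [hU']
    rw [Matrix.mul_apply] at key
    simp [Matrix.one_apply, Fin.sum_univ_three, Matrix.star_apply, h00, h11] at key
    rcases key with key | key
    · rw [key] at h20; simp at h20
    · rw [key] at h21; simp at h21
end

section
/- For d = 3, every circulant unistochastic matrix is doubly circulant: if B is a 3×3 circulant bistochastic matrix and there exists a 3×3 unitary matrix U with |U_{jk}|² = B_{jk} for all j,k, then there also exists a 3×3 circulant unitary matrix V with |V_{jk}|² = B_{jk} for all j,k. -/
/-- A `d × d` matrix is circulant if its entry at `(i, j)` depends only on `i - j`
modulo `d`. -/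
def IsCirculant {d : ℕ} {α : Type*} (M : Matrix (Fin d) (Fin d) α) : Prop :=
  ∃ v : Fin d → α, M = Matrix.circulant v

open Complex in
theorem build_aux (B : Matrix (Fin 3) (Fin 3) ℝ) (w : Fin 3 → ℝ)
    (hw : B = Matrix.circulant w) (hsum : w 0 + w 1 + w 2 = 1)
    (v : Fin 3 → ℂ)
    (h0 : v 0 * (starRingEnd ℂ) (v 0) = (w 0 : ℂ))
    (h1 : v 1 * (starRingEnd ℂ) (v 1) = (w 1 : ℂ))
    (h2 : v 2 * (starRingEnd ℂ) (v 2) = (w 2 : ℂ))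
    (hE : v 1 * (starRingEnd ℂ) (v 0) + v 2 * (starRingEnd ℂ) (v 1)
        + v 0 * (starRingEnd ℂ) (v 2) = 0) :
    ∃ V ∈ Matrix.unitaryGroup (Fin 3) ℂ,
      IsCirculant V ∧ ∀ j k, ‖V j k‖ ^ 2 = B j k := by
  have hE' : (starRingEnd ℂ) (v 1) * v 0 + (starRingEnd ℂ) (v 2) * v 1
      + (starRingEnd ℂ) (v 0) * v 2 = 0 := by
    have := congrArg (starRingEnd ℂ) hE
    simpa [mul_comm] using this
  have hs : (w 0 : ℂ) + w 1 + w 2 = 1 := by exact_mod_cast congrArg (fun x : ℝ => (x : ℂ)) hsum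
  refine ⟨Matrix.circulant v, ?_, ⟨v, rfl⟩, ?_⟩
  · rw [Matrix.mem_unitaryGroup_iff]
    ext i j
    fin_cases i <;> fin_cases j <;>
      simp [Matrix.mul_apply, Matrix.circulant_apply, Fin.sum_univ_three, Matrix.one_apply,
        Matrix.conjTranspose_apply, show ((-1 : Fin 3)) = 2 from rfl,
        show ((-2 : Fin 3)) = 1 from rfl] <;>
      first
        | linear_combination h0 + h1 + h2 + hs
        | linear_combination hE
        | linear_combination hE'
  · intro j k
    have key : ∀ m : Fin 3, ‖v m‖ ^ 2 = w m := by
      intro m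
      fin_cases m
      · rw [Complex.mul_conj] at h0; rw [Complex.sq_norm]; exact_mod_cast h0
      · rw [Complex.mul_conj] at h1; rw [Complex.sq_norm]; exact_mod_cast h1
      · rw [Complex.mul_conj] at h2; rw [Complex.sq_norm]; exact_mod_cast h2
    simp [hw, Matrix.circulant_apply, key]


/-- Every `3 × 3` circulant unistochastic matrix is doubly circulant: if `B` is a circulant
bistochastic matrix with `|U j k|² = B j k` for some unitary `U`, then there is a circulant
unitary `V` with `|V j k|² = B j k`. -/
theorem circulant3_doubly_circulant (B : Matrix (Fin 3) (Fin 3) ℝ)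
    (hB : Bistochastic B) (hc : IsCirculant B)
    (U : Matrix (Fin 3) (Fin 3) ℂ) (hU : U ∈ Matrix.unitaryGroup (Fin 3) ℂ)
    (h : ∀ j k, ‖U j k‖ ^ 2 = B j k) :
    ∃ V ∈ Matrix.unitaryGroup (Fin 3) ℂ,
      IsCirculant V ∧ ∀ j k, ‖V j k‖ ^ 2 = B j k := by
  obtain ⟨w, hw⟩ := hc
  have hBe : ∀ k l : Fin 3, B k l = w (k - l) := by
    intro k l; rw [hw]; rfl
  have hsum : w 0 + w 1 + w 2 = 1 := by
    have h3 := hB.2.1 0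
    rw [Fin.sum_univ_three, hBe, hBe, hBe] at h3
    simp only [show ((0:Fin 3) - 0) = 0 from rfl, show ((0:Fin 3) - 1) = 2 from rfl,
      show ((0:Fin 3) - 2) = 1 from rfl] at h3
    linarith
  -- the three sums of columns 0 and 1 products
  set t : Fin 3 → ℂ := fun k => (starRingEnd ℂ) (U k 0) * U k 1 with ht_def
  have habs : ∀ j k : Fin 3, (U j k) * (starRingEnd ℂ) (U j k) = ((B j k : ℝ) : ℂ) := by
    intro j k
    rw [Complex.mul_conj]
    norm_cast
    rw [← Complex.sq_norm]
    exact h j k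
  have htk : ∀ k : Fin 3, t k * (starRingEnd ℂ) (t k) = ((B k 0 : ℝ):ℂ) * ((B k 1 : ℝ):ℂ) := by
    intro k
    simp only [ht_def, map_mul, Complex.conj_conj]
    linear_combination (U k 1 * (starRingEnd ℂ) (U k 1)) * habs k 0 + ((B k 0 : ℝ):ℂ) * habs k 1
  have ht0 : t 0 * (starRingEnd ℂ) (t 0) = ((w 0 : ℝ):ℂ) * ((w 2 : ℝ):ℂ) := by
    have := htk 0
    rwa [hBe, hBe, show ((0:Fin 3) - 0) = 0 from rfl, show ((0:Fin 3) - 1) = 2 from rfl] at this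
  have ht1 : t 1 * (starRingEnd ℂ) (t 1) = ((w 1 : ℝ):ℂ) * ((w 0 : ℝ):ℂ) := by
    have := htk 1
    rwa [hBe, hBe, show ((1:Fin 3) - 0) = 1 from rfl, show ((1:Fin 3) - 1) = 0 from rfl] at this
  have ht2 : t 2 * (starRingEnd ℂ) (t 2) = ((w 2 : ℝ):ℂ) * ((w 1 : ℝ):ℂ) := by
    have := htk 2
    rwa [hBe, hBe, show ((2:Fin 3) - 0) = 2 from rfl, show ((2:Fin 3) - 1) = 1 from rfl] at this
  have hTsum : t 0 + t 1 + t 2 = 0 := by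
    have hUU := Matrix.mem_unitaryGroup_iff'.mp hU
    have h01 := congrArg (fun M : Matrix (Fin 3) (Fin 3) ℂ => M 0 1) hUU
    simpa [Matrix.mul_apply, Fin.sum_univ_three, Matrix.one_apply, ht_def,
      Matrix.conjTranspose_apply] using h01
  have hz : ∀ z : ℂ, z * (starRingEnd ℂ) z = 0 → z = 0 := by
    intro z hz0
    rcases mul_eq_zero.mp hz0 with h'|h'
    · exact h'
    · simpa using h'
  have hw0nn : 0 ≤ w 0 := by have := hB.1 0 0; rwa [hBe, show ((0:Fin 3)-0) = 0 from rfl] at this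
  have hw1nn : 0 ≤ w 1 := by have := hB.1 1 0; rwa [hBe, show ((1:Fin 3)-0) = 1 from rfl] at this
  have hw2nn : 0 ≤ w 2 := by have := hB.1 2 0; rwa [hBe, show ((2:Fin 3)-0) = 2 from rfl] at this
  by_cases hA : w 0 = 0
  · have e0 : t 0 = 0 := hz _ (by rw [ht0, hA]; push_cast; ring)
    have e1 : t 1 = 0 := hz _ (by rw [ht1, hA]; push_cast; ring)
    have e2 : t 2 = 0 := by linear_combination hTsum - e0 - e1
    have hc' : ((w 2 : ℝ):ℂ) * ((w 1:ℝ):ℂ) = 0 := by rw [← ht2, e2]; ring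
    have hprod : w 2 * w 1 = 0 := by exact_mod_cast hc'
    rcases mul_eq_zero.mp hprod with hB2|hB1
    · have hw1 : w 1 = 1 := by linarith
      exact build_aux B w hw hsum ![0,1,0] (by simp [hA]) (by simp [hw1]) (by simp [hB2])
        (by simp)
    · have hw2 : w 2 = 1 := by linarith
      exact build_aux B w hw hsum ![0,0,1] (by simp [hA]) (by simp [hB1]) (by simp [hw2])
        (by simp)
  by_cases hBz : w 1 = 0
  · have e1 : t 1 = 0 := hz _ (by rw [ht1, hBz]; push_cast; ring)
    have e2 : t 2 = 0 := hz _ (by rw [ht2, hBz]; push_cast; ring)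
    have e0 : t 0 = 0 := by linear_combination hTsum - e1 - e2
    have hc' : ((w 0 : ℝ):ℂ) * ((w 2:ℝ):ℂ) = 0 := by rw [← ht0, e0]; ring
    have hprod : w 0 * w 2 = 0 := by exact_mod_cast hc'
    rcases mul_eq_zero.mp hprod with hB0|hB2
    · exact absurd hB0 hA
    · have hw0 : w 0 = 1 := by linarith
      exact build_aux B w hw hsum ![1,0,0] (by simp [hw0]) (by simp [hBz]) (by simp [hB2])
        (by simp)
  by_cases hCz : w 2 = 0
  · have e0 : t 0 = 0 := hz _ (by rw [ht0, hCz]; push_cast; ring)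
    have e2 : t 2 = 0 := hz _ (by rw [ht2, hCz]; push_cast; ring)
    have e1 : t 1 = 0 := by linear_combination hTsum - e0 - e2
    have hc' : ((w 1 : ℝ):ℂ) * ((w 0:ℝ):ℂ) = 0 := by rw [← ht1, e1]; ring
    have hprod : w 1 * w 0 = 0 := by exact_mod_cast hc'
    rcases mul_eq_zero.mp hprod with hB1|hB0
    · exact absurd hB1 hBz
    · exact absurd hB0 hA
  -- main case : all entries positive
  have hA' : 0 < w 0 := lt_of_le_of_ne hw0nn (Ne.symm hA)
  have hB' : 0 < w 1 := lt_of_le_of_ne hw1nn (Ne.symm hBz)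
  have hC' : 0 < w 2 := lt_of_le_of_ne hw2nn (Ne.symm hCz)
  have hpos : 0 < w 0 * w 1 * w 2 := by positivity
  set P : ℂ := t 0 * t 1 * t 2 with hP_def
  have hPconj : P * (starRingEnd ℂ) P = (((w 0 * w 1 * w 2)^2 : ℝ) : ℂ) := by
    simp only [hP_def, map_mul]
    push_cast
    linear_combination (t 1 * (starRingEnd ℂ) (t 1) * (t 2 * (starRingEnd ℂ) (t 2))) * ht0
      + (((w 0:ℝ):ℂ) * ((w 2:ℝ):ℂ)) * (t 2 * (starRingEnd ℂ) (t 2)) * ht1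
      + (((w 0:ℝ):ℂ) * ((w 2:ℝ):ℂ) * ((w 1:ℝ):ℂ) * ((w 0:ℝ):ℂ)) * ht2
  have habsP : ‖P‖ = w 0 * w 1 * w 2 := by
    have h1 : ‖P‖ ^ 2 = (w 0 * w 1 * w 2) ^ 2 := by
      rw [Complex.mul_conj] at hPconj
      rw [Complex.sq_norm]
      exact_mod_cast hPconj
    rw [← Real.sqrt_sq (norm_nonneg P), h1, Real.sqrt_sq hpos.le]
  set u : ℂ := Complex.exp (((-(Complex.arg P) / 3 : ℝ) : ℂ) * Complex.I) with hu_def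
  have huconj : u * (starRingEnd ℂ) u = 1 := by
    have hcu : (starRingEnd ℂ) u
        = Complex.exp (-(((-(Complex.arg P) / 3 : ℝ) : ℂ) * Complex.I)) := by
      rw [hu_def, ← Complex.exp_conj]
      congr 1
      rw [map_mul, Complex.conj_ofReal, Complex.conj_I]
      ring
    rw [hcu, hu_def, ← Complex.exp_add, add_neg_cancel, Complex.exp_zero]
  have hu3 : P * u ^ 3 = ((w 0 * w 1 * w 2 : ℝ) : ℂ) := by
    have hPdec := Complex.norm_mul_exp_arg_mul_I P
    rw [← hPdec, habsP]
    rw [show (u ^ 3 : ℂ)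
        = Complex.exp ((3:ℕ) * (((-(Complex.arg P) / 3 : ℝ) : ℂ) * Complex.I)) by
      rw [← Complex.exp_nat_mul]]
    rw [mul_assoc, ← Complex.exp_add]
    have : ((Complex.arg P : ℂ)) * Complex.I
        + (3:ℕ) * (((-(Complex.arg P) / 3 : ℝ) : ℂ) * Complex.I) = 0 := by
      push_cast; ring
    rw [this, Complex.exp_zero, mul_one]
  set p : ℂ := t 1 * u with hp_def
  set q : ℂ := t 2 * u with hq_def
  set r : ℂ := t 0 * u with hr_def
  have hp : p * (starRingEnd ℂ) p = ((w 1:ℝ):ℂ) * ((w 0:ℝ):ℂ) := by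
    simp only [hp_def, map_mul]
    linear_combination (u * (starRingEnd ℂ) u) * ht1 + (((w 1:ℝ):ℂ) * ((w 0:ℝ):ℂ)) * huconj
  have hq : q * (starRingEnd ℂ) q = ((w 2:ℝ):ℂ) * ((w 1:ℝ):ℂ) := by
    simp only [hq_def, map_mul]
    linear_combination (u * (starRingEnd ℂ) u) * ht2 + (((w 2:ℝ):ℂ) * ((w 1:ℝ):ℂ)) * huconj
  have hr : r * (starRingEnd ℂ) r = ((w 0:ℝ):ℂ) * ((w 2:ℝ):ℂ) := by
    simp only [hr_def, map_mul]
    linear_combination (u * (starRingEnd ℂ) u) * ht0 + (((w 0:ℝ):ℂ) * ((w 2:ℝ):ℂ)) * huconj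
  have hpqr : p * q * r = ((w 0:ℝ):ℂ) * ((w 1:ℝ):ℂ) * ((w 2:ℝ):ℂ) := by
    have := hu3
    push_cast at this
    rw [hp_def, hq_def, hr_def]
    linear_combination this
  have hprsum : p + q + r = 0 := by
    rw [hp_def, hq_def, hr_def]
    linear_combination u * hTsum
  have hp0 : p ≠ 0 := by
    intro hzz
    have h' : (((w 1:ℝ):ℂ) * ((w 0:ℝ):ℂ)) = 0 := by rw [← hp, hzz]; ring
    have h'' : w 1 * w 0 = 0 := by exact_mod_cast h'
    nlinarith
  have hr0 : r ≠ 0 := by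
    intro hzz
    have h' : (((w 0:ℝ):ℂ) * ((w 2:ℝ):ℂ)) = 0 := by rw [← hr, hzz]; ring
    have h'' : w 0 * w 2 = 0 := by exact_mod_cast h'
    nlinarith
  have hkey : (starRingEnd ℂ) p * (starRingEnd ℂ) r = ((w 0:ℝ):ℂ) * q := by
    apply mul_left_cancel₀ (mul_ne_zero hp0 hr0)
    linear_combination (r * (starRingEnd ℂ) r) * hp + (((w 1:ℝ):ℂ) * ((w 0:ℝ):ℂ)) * hr
      - ((w 0:ℝ):ℂ) * hpqr
  set sa : ℝ := Real.sqrt (w 0) with hsa_def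
  have hsa : ((sa:ℝ):ℂ) * ((sa:ℝ):ℂ) = ((w 0:ℝ):ℂ) := by
    have : sa * sa = w 0 := Real.mul_self_sqrt hw0nn
    exact_mod_cast congrArg (fun x : ℝ => (x:ℂ)) this
  have hsane : ((sa:ℝ):ℂ) ≠ 0 := by
    simp only [ne_eq, Complex.ofReal_eq_zero]
    exact (Real.sqrt_pos.mpr hA').ne'
  refine build_aux B w hw hsum ![(sa:ℂ), p / (sa:ℂ), (starRingEnd ℂ) r / (sa:ℂ)] ?_ ?_ ?_ ?_
  · simp only [Matrix.cons_val_zero, Complex.conj_ofReal]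
    exact hsa
  · simp only [Matrix.cons_val_one, Matrix.head_cons, map_div₀, Complex.conj_ofReal, Matrix.cons_val_zero]
    field_simp
    linear_combination hp - ((w 1:ℝ):ℂ) * hsa
  · simp only [Matrix.cons_val_two, Matrix.vecHead, Matrix.vecTail, Function.comp_apply,
      Fin.succ_zero_eq_one, Matrix.cons_val_one, Matrix.head_cons, map_div₀, Complex.conj_conj,
      Complex.conj_ofReal, Matrix.cons_val_zero]
    field_simp
    linear_combination hr - ((w 2:ℝ):ℂ) * hsa
  · simp only [Matrix.cons_val_zero, Matrix.cons_val_one, Matrix.head_cons, Matrix.cons_val_two,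
      Matrix.vecHead, Matrix.vecTail, Function.comp_apply, Fin.succ_zero_eq_one, map_div₀,
      Complex.conj_conj, Complex.conj_ofReal]
    have hw0ne : ((w 0:ℝ):ℂ) ≠ 0 := by
      simp only [ne_eq, Complex.ofReal_eq_zero]; exact hA
    have e1 : p / ((sa:ℝ):ℂ) * ((sa:ℝ):ℂ) = p := div_mul_cancel₀ p hsane
    have e2 : (starRingEnd ℂ) r / ((sa:ℝ):ℂ) * ((starRingEnd ℂ) p / ((sa:ℝ):ℂ)) = q := by
      rw [div_mul_div_comm, mul_comm ((starRingEnd ℂ) r) ((starRingEnd ℂ) p), hkey, hsa]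
      exact mul_div_cancel_left₀ q hw0ne
    have e3 : ((sa:ℝ):ℂ) * (r / ((sa:ℝ):ℂ)) = r := mul_div_cancel₀ r hsane
    rw [e1, e2, e3]
    exact hprsum
end

section
/- Let U be a d×d circulant unitary matrix, let B be the bistochastic matrix with entries B_{jk} = |U_{jk}|², and let u_0, …, u_{d−1} be the eigenvalues of U obtained by diagonalizing U with the Fourier matrix, i.e., u_j = Σ_{k=0}^{d−1} a_k exp(2πi kj/d) where a_k is the first row of U. Then the eigenvalues of B are b_k = (1/d) · Σ_{j=0}^{d−1} u_j · conj(u_{j−k}), with the index j−k taken modulo d, for k = 0, …, d−1. -/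
lemma aux_pow_mod {d : ℕ} (x : ℂ) (hx : x ^ d = 1) (a : ℕ) : x ^ (a % d) = x ^ a := by
  conv_rhs => rw [← Nat.div_add_mod a d, pow_add, pow_mul, hx, one_pow, one_mul]

lemma aux_root_sum {d : ℕ} (x : ℂ) (hx : x ^ d = 1) :
    ∑ j : Fin d, x ^ (j : ℕ) = if x = 1 then (d : ℂ) else 0 := by
  rw [Fin.sum_univ_eq_sum_range]
  split_ifs with h
  · simp [h]
  · rw [geom_sum_eq h, hx, sub_self, zero_div]

lemma aux_charpoly_conj {d : ℕ} (F M D : Matrix (Fin d) (Fin d) ℂ)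
    (hF : F.det ≠ 0) (h : F * M = D * F) : M.charpoly = D.charpoly := by
  have key : (F.map Polynomial.C) * M.charmatrix = D.charmatrix * (F.map Polynomial.C) := by
    have h1 : (F.map Polynomial.C) * ((Polynomial.C : ℂ →+* _).mapMatrix M)
        = ((Polynomial.C : ℂ →+* _).mapMatrix D) * (F.map Polynomial.C) := by
      simp only [RingHom.mapMatrix_apply]
      rw [← Matrix.map_mul, h, Matrix.map_mul]
    have h2 : (F.map Polynomial.C) * Matrix.scalar (Fin d) (Polynomial.X) =
        Matrix.scalar (Fin d) (Polynomial.X) * (F.map Polynomial.C) := by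
      ext i j
      rw [Matrix.scalar_apply, Matrix.mul_diagonal, Matrix.diagonal_mul, mul_comm]
    rw [Matrix.charmatrix, Matrix.charmatrix, mul_sub, sub_mul, h1, h2]
  have hdet := congrArg Matrix.det key
  rw [Matrix.det_mul, Matrix.det_mul] at hdet
  have hFC : (F.map Polynomial.C).det ≠ 0 := by
    have : F.map Polynomial.C = (Polynomial.C : ℂ →+* _).mapMatrix F := rfl
    rw [this, ← RingHom.map_det]
    simpa using hF
  rw [Matrix.charpoly, Matrix.charpoly]
  rw [mul_comm ((F.map Polynomial.C).det)] at hdet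
  exact mul_right_cancel₀ hFC hdet

lemma aux_charpoly_diagonal {d : ℕ} (b : Fin d → ℂ) :
    (Matrix.diagonal b).charpoly = ∏ k, (Polynomial.X - Polynomial.C (b k)) := by
  rw [Matrix.charpoly]
  have : (Matrix.diagonal b).charmatrix =
      Matrix.diagonal (fun k => Polynomial.X - Polynomial.C (b k)) := by
    ext i j
    by_cases h : i = j
    · subst h; simp
    · simp [Matrix.charmatrix_apply_ne _ _ _ h, Matrix.diagonal_apply_ne _ h]
  rw [this, Matrix.det_diagonal]

/-- Let `U` be a `d × d` circulant unitary matrix, `B` the bistochastic matrix with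
`B j k = |U j k|²`, and let `u j = ∑ k, a k * exp(2πi k j / d)` where `a` is the first row
of `U` (the eigenvalues of `U` obtained from the Fourier diagonalization). Then the
eigenvalues of `B` are exactly `b k = (1/d) ∑ j, u j * conj (u (j - k))` for `k : Fin d`,
i.e. the characteristic polynomial of `B` (over `ℂ`) is `∏ k, (X - b k)`. -/
theorem eigenvalues_doubly_circulant {d : ℕ} (hd : 0 < d)
    (U : Matrix (Fin d) (Fin d) ℂ) (hU : U ∈ Matrix.unitaryGroup (Fin d) ℂ)
    (hUc : IsCirculant U)
    (B : Matrix (Fin d) (Fin d) ℝ) (hB : ∀ j k, B j k = ‖U j k‖ ^ 2)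
    (u : Fin d → ℂ)
    (hu : ∀ j : Fin d, u j = ∑ k : Fin d,
      U ⟨0, hd⟩ k * Complex.exp (2 * Real.pi * Complex.I * (k : ℕ) * (j : ℕ) / d)) :
    (B.map (fun x : ℝ => (x : ℂ))).charpoly =
      ∏ k : Fin d, (Polynomial.X - Polynomial.C
        ((1 / (d : ℂ)) * ∑ j : Fin d, u j * (starRingEnd ℂ) (u (j - k)))) := by
  haveI : NeZero d := ⟨hd.ne'⟩
  obtain ⟨v, rfl⟩ := hUc
  clear hU
  set ζ : ℂ := Complex.exp (2 * Real.pi * Complex.I / d) with hζdef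
  have hζ : IsPrimitiveRoot ζ d := Complex.isPrimitiveRoot_exp d hd.ne'
  have hζd : ζ ^ d = 1 := hζ.pow_eq_one
  have habs : ‖ζ‖ = 1 := by
    have h1 : (2 * Real.pi * Complex.I / d) = ((2 * Real.pi / d : ℝ)) * Complex.I := by
      push_cast; ring
    rw [hζdef, h1, Complex.norm_exp_ofReal_mul_I]
  set E : Fin d → ℂ := fun x => ζ ^ (x : ℕ) with hEdef
  have hEd : ∀ x, (E x) ^ d = 1 := fun x => by
    rw [hEdef]; dsimp only; rw [← pow_mul, mul_comm, pow_mul, hζd, one_pow]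
  have hEabs : ∀ x, ‖E x‖ = 1 := fun x => by
    rw [hEdef]; dsimp only; rw [norm_pow, habs, one_pow]
  have hEadd : ∀ x y, E (x + y) = E x * E y := fun x y => by
    rw [hEdef]; dsimp only
    rw [Fin.val_add, aux_pow_mod ζ hζd, pow_add]
  have hE1 : ∀ x : Fin d, E x = 1 ↔ x = 0 := fun x => by
    constructor
    · intro h
      have hx : (x : ℕ) = (0 : ℕ) := hζ.pow_inj x.isLt hd (by simpa using h)
      exact Fin.ext (by simpa using hx)
    · rintro rfl; simp [hEdef]
  have hEinj : Function.Injective E := fun x y h =>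
    Fin.ext (hζ.pow_inj x.isLt y.isLt h)
  set P : Fin d → Fin d → ℂ := fun x y => (E x) ^ (y : ℕ) with hPdef
  have hPsymm : ∀ x y, P x y = P y x := fun x y => by
    simp only [hPdef, hEdef, ← pow_mul]; rw [mul_comm]
  have hPadd2 : ∀ x y z, P x (y + z) = P x y * P x z := fun x y z => by
    simp only [hPdef]
    rw [Fin.val_add, aux_pow_mod _ (hEd x), pow_add]
  have hPadd1 : ∀ x y z, P (x + y) z = P x z * P y z := fun x y z => by
    rw [hPsymm, hPadd2, hPsymm z x, hPsymm z y]
  have hPzero2 : ∀ x, P x 0 = 1 := fun x => by simp [hPdef]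
  have hPinv2 : ∀ x y, P x (-y) = (P x y)⁻¹ := fun x y =>
    eq_inv_of_mul_eq_one_left (by rw [← hPadd2, neg_add_cancel, hPzero2])
  have hPinv1 : ∀ x y, P (-x) y = (P x y)⁻¹ := fun x y => by
    rw [hPsymm, hPinv2, hPsymm]
  have hPconj : ∀ x y, (starRingEnd ℂ) (P x y) = (P x y)⁻¹ := fun x y =>
    (Complex.inv_eq_conj (by rw [hPdef]; dsimp only; rw [norm_pow, hEabs, one_pow])).symm
  have hz0 : (⟨0, hd⟩ : Fin d) = 0 := Fin.ext (by simp)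
  set a : Fin d → ℂ := fun m => v (-m) with hadef
  have hU0 : ∀ k, Matrix.circulant v ⟨0, hd⟩ k = a k := fun k => by
    rw [Matrix.circulant_apply, hz0, zero_sub]
  have hu' : ∀ j, u j = ∑ m, a m * P m j := fun j => by
    rw [hu j]
    refine Finset.sum_congr rfl fun m _ => ?_
    rw [hU0]
    congr 1
    have h1 : (2 * Real.pi * Complex.I * ((m : Fin d) : ℕ) * (j : ℕ) / d) =
        (((m : ℕ) * (j : ℕ) : ℕ) : ℂ) * (2 * Real.pi * Complex.I / d) := by
      push_cast; ring
    rw [h1, Complex.exp_nat_mul, ← hζdef, hPdef]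
    dsimp only
    rw [hEdef]
    dsimp only
    rw [← pow_mul]
  set w : Fin d → ℂ := fun m => ((‖v m‖ : ℝ) ^ 2 : ℝ) with hwdef
  have hBw : B.map (fun x : ℝ => (x : ℂ)) = Matrix.circulant w := by
    ext j k
    simp only [Matrix.map_apply, hB, Matrix.circulant_apply, hwdef]
  have haw : ∀ m, a m * (starRingEnd ℂ) (a m) = w (-m) := fun m => by
    rw [hadef, hwdef]
    dsimp only
    rw [Complex.mul_conj]
    norm_cast
    rw [Complex.sq_norm]
  have hsumP : ∀ m n : Fin d, ∑ j : Fin d, P (m - n) j = if m = n then (d : ℂ) else 0 := by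
    intro m n
    rw [show (∑ j : Fin d, P (m - n) j) = ∑ j : Fin d, (E (m - n)) ^ (j : ℕ) from rfl,
      aux_root_sum _ (hEd _), if_congr ((hE1 _).trans sub_eq_zero) rfl rfl]
  set b : Fin d → ℂ := fun k =>
    (1 / (d : ℂ)) * ∑ j : Fin d, u j * (starRingEnd ℂ) (u (j - k)) with hbdef
  have hb : ∀ k, b k = ∑ m, w m * P (-k) m := by
    intro k
    have step1 : ∀ j : Fin d, u j * (starRingEnd ℂ) (u (j - k)) =
        ∑ m, ∑ n, (a m * (starRingEnd ℂ) (a n) * P n k) * (P (m - n) j) := by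
      intro j
      rw [hu' j, hu' (j - k), map_sum, Finset.sum_mul_sum]
      refine Finset.sum_congr rfl fun m _ => Finset.sum_congr rfl fun n _ => ?_
      rw [map_mul, hPconj]
      have h1 : P n (j - k) = P n j * (P n k)⁻¹ := by
        rw [sub_eq_add_neg, hPadd2, hPinv2]
      have h2 : P (m - n) j = P m j * (P n j)⁻¹ := by
        rw [sub_eq_add_neg, hPadd1, hPinv1]
      rw [h1, h2, mul_inv, inv_inv]
      ring
    have step2 : (∑ j : Fin d, u j * (starRingEnd ℂ) (u (j - k))) =
        ∑ m, ∑ n, (a m * (starRingEnd ℂ) (a n) * P n k) * ∑ j, P (m - n) j := by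
      rw [Finset.sum_congr rfl fun j _ => step1 j, Finset.sum_comm]
      refine Finset.sum_congr rfl fun m _ => ?_
      rw [Finset.sum_comm]
      exact Finset.sum_congr rfl fun n _ => (Finset.mul_sum _ _ _).symm
    have step3 : (∑ j : Fin d, u j * (starRingEnd ℂ) (u (j - k))) =
        ∑ m, (a m * (starRingEnd ℂ) (a m) * P m k) * d := by
      rw [step2]
      refine Finset.sum_congr rfl fun m _ => ?_
      simp only [hsumP, mul_ite, mul_zero]
      rw [Finset.sum_ite_eq]
      simp
    rw [hbdef]
    dsimp only
    rw [step3]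
    have hd0 : (d : ℂ) ≠ 0 := Nat.cast_ne_zero.mpr hd.ne'
    rw [Finset.mul_sum]
    have step4 : ∀ m : Fin d, (1 / (d : ℂ)) * ((a m * (starRingEnd ℂ) (a m) * P m k) * d)
        = w (-m) * P m k := by
      intro m
      rw [haw]
      field_simp
    rw [Finset.sum_congr rfl fun m _ => step4 m]
    have hPP : ∀ m, P (-m) k = P (-k) m := fun m => by
      rw [hPsymm, hPinv2, hPsymm k m, ← hPinv2, hPsymm]
    have := Equiv.sum_comp (Equiv.neg (Fin d)) (fun m => w m * P (-m) k)
    simp only [Equiv.neg_apply, neg_neg] at this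
    rw [this]
    exact Finset.sum_congr rfl fun m _ => by rw [hPP]
  set F : Matrix (Fin d) (Fin d) ℂ := Matrix.of fun j k => P (-j) k with hFdef
  have hFapp : ∀ j k, F j k = P (-j) k := fun j k => rfl
  have hFBD : F * Matrix.circulant w = Matrix.diagonal b * F := by
    ext j k
    rw [Matrix.mul_apply, Matrix.diagonal_mul]
    calc ∑ l, F j l * Matrix.circulant w l k
        = ∑ m, F j ((Equiv.addRight k) m) * Matrix.circulant w ((Equiv.addRight k) m) k :=
          (Equiv.sum_comp (Equiv.addRight k) (fun l => F j l * Matrix.circulant w l k)).symm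
      _ = ∑ m, (P (-j) k) * (w m * P (-j) m) := by
          refine Finset.sum_congr rfl fun m _ => ?_
          rw [hFapp, Equiv.coe_addRight, Matrix.circulant_apply, add_sub_cancel_right, hPadd2]
          ring
      _ = P (-j) k * b j := by rw [← Finset.mul_sum, hb j]
      _ = b j * F j k := by rw [hFapp]; exact mul_comm _ _
  have hFv : F = Matrix.vandermonde (fun j => E (-j)) := by
    ext j k
    rw [hFapp, Matrix.vandermonde_apply]
  have hdetF : F.det ≠ 0 := by
    rw [hFv, Ne, Matrix.det_vandermonde_eq_zero_iff]
    push_neg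
    intro i j h
    exact neg_injective (hEinj h)
  rw [hBw, aux_charpoly_conj F _ (Matrix.diagonal b) hdetF hFBD, aux_charpoly_diagonal]
end
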